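/- arXiv:1707.02632 — 2 statements merged into one kernel-verified Lean document; each statement's English description precedes it below -/
import Mathlib

section
/- Let E be a symmetric Banach function space on I=[0,α) with the Fatou property. If x∈E is an LLUKM point (point of lower local uniform K-monotonicity), then x*(∞)=0. -/
open MeasureTheory Filter Topology Set
open scoped ENNReal

noncomputable section

/-- Lebesgue measure restricted to the interval `I = [0, α)`, where `α : ℝ≥0∞`. -/
def muI (α : ℝ≥0∞) : Measure ℝ :=
  volume.restrict {s : ℝ | 0 ≤ s ∧ ENNReal.ofReal s < α}

/-- The distribution function `d_x(λ) = μ{s ∈ I : |x(s)| > λ}`. -/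
def distr (α : ℝ≥0∞) (x : ℝ → ℝ) (lam : ℝ) : ℝ≥0∞ :=
  muI α {s : ℝ | lam < |x s|}

/-- The decreasing rearrangement `x*(t) = inf{λ > 0 : d_x(λ) ≤ t}`. -/
def rearr (α : ℝ≥0∞) (x : ℝ → ℝ) (t : ℝ) : ℝ :=
  sInf {lam : ℝ | 0 < lam ∧ distr α x lam ≤ ENNReal.ofReal t}

/-- The maximal function `x**(t) = (1/t) ∫₀ᵗ x*(s) ds`. -/
def maxf (α : ℝ≥0∞) (x : ℝ → ℝ) (t : ℝ) : ℝ :=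
  (∫ s in Set.Ioc (0 : ℝ) t, rearr α x s) / t

/-- The Hardy–Littlewood–Pólya relation `x ≺ y`, i.e. `x**(t) ≤ y**(t)` for all `t > 0`. -/
def HLP (α : ℝ≥0∞) (x y : ℝ → ℝ) : Prop :=
  ∀ t : ℝ, 0 < t → maxf α x t ≤ maxf α y t

/-- `x*(∞) = 0`: automatic when `α ≠ ∞`, and `lim_{t→∞} x*(t) = 0` when `α = ∞`. -/
def rearrInftyZero (α : ℝ≥0∞) (x : ℝ → ℝ) : Prop :=
  α = ∞ → Tendsto (rearr α x) atTop (𝓝 0)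

/-- A symmetric Banach function space on `[0, α)` with the Fatou property. -/
structure SymmetricBFS (α : ℝ≥0∞) where
  /-- membership in the space `E` -/
  Mem : (ℝ → ℝ) → Prop
  /-- the norm of `E` -/
  N : (ℝ → ℝ) → ℝ
  mem_aemeasurable : ∀ ⦃x⦄, Mem x → AEMeasurable x (muI α)
  zero_mem : Mem 0
  add_mem : ∀ ⦃x y⦄, Mem x → Mem y → Mem (x + y)
  smul_mem : ∀ (c : ℝ) ⦃x⦄, Mem x → Mem (c • x)
  norm_nonneg' : ∀ x, 0 ≤ N x
  norm_zero' : N 0 = 0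
  norm_add_le : ∀ x y, N (x + y) ≤ N x + N y
  norm_smul' : ∀ (c : ℝ) (x : ℝ → ℝ), N (c • x) = |c| * N x
  norm_eq_zero_iff : ∀ ⦃x⦄, Mem x → (N x = 0 ↔ (∀ᵐ s ∂(muI α), x s = 0))
  /-- the ideal (Banach function space) property -/
  ideal : ∀ ⦃x y⦄, AEMeasurable x (muI α) → Mem y →
    (∀ᵐ s ∂(muI α), |x s| ≤ |y s|) → Mem x ∧ N x ≤ N y
  /-- there is a strictly positive element -/
  exists_strictPos : ∃ x, Mem x ∧ ∀ᵐ s ∂(muI α), 0 < x s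
  /-- norm completeness -/
  complete : ∀ u : ℕ → ℝ → ℝ, (∀ n, Mem (u n)) →
    (∀ ε : ℝ, 0 < ε → ∃ n₀ : ℕ, ∀ m n, n₀ ≤ m → n₀ ≤ n → N (u m - u n) < ε) →
    ∃ x, Mem x ∧ Tendsto (fun n => N (u n - x)) atTop (𝓝 0)
  /-- symmetry: equimeasurable functions have equal norms -/
  symmetric : ∀ ⦃x y⦄, AEMeasurable x (muI α) → Mem y →
    distr α x = distr α y → Mem x ∧ N x = N y
  /-- the Fatou property -/
  fatou : ∀ (u : ℕ → ℝ → ℝ) (x : ℝ → ℝ), (∀ n, Mem (u n)) →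
    AEMeasurable x (muI α) →
    (∀ n, ∀ᵐ s ∂(muI α), 0 ≤ u n s) →
    (∀ n, ∀ᵐ s ∂(muI α), u n s ≤ u (n + 1) s) →
    (∀ᵐ s ∂(muI α), Tendsto (fun n => u n s) atTop (𝓝 (x s))) →
    (∃ C : ℝ, ∀ n, N (u n) ≤ C) →
    Mem x ∧ Tendsto (fun n => N (u n)) atTop (𝓝 (N x))

variable {α : ℝ≥0∞}

/-- The fundamental function `φ(t) = ‖χ_{(0,t)}‖_E`. -/
def SymmetricBFS.fund (E : SymmetricBFS α) (t : ℝ) : ℝ :=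
  E.N (Set.indicator (Set.Ioo 0 t) fun _ => (1 : ℝ))

/-- `x` is a point of lower local uniform `K`-monotonicity (`LLUKM` point). -/
def SymmetricBFS.IsLLUKMPoint (E : SymmetricBFS α) (x : ℝ → ℝ) : Prop :=
  ∀ u : ℕ → ℝ → ℝ, (∀ n, E.Mem (u n)) → (∀ n, HLP α (u n) x) →
    Tendsto (fun n => E.N (u n)) atTop (𝓝 (E.N x)) →
    Tendsto (fun n => E.N (rearr α (u n) - rearr α x)) atTop (𝓝 0)

/-- `x` is a point of upper local uniform `K`-monotonicity (`ULUKM` point). -/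
def SymmetricBFS.IsULUKMPoint (E : SymmetricBFS α) (x : ℝ → ℝ) : Prop :=
  ∀ u : ℕ → ℝ → ℝ, (∀ n, E.Mem (u n)) → (∀ n, HLP α x (u n)) →
    Tendsto (fun n => E.N (u n)) atTop (𝓝 (E.N x)) →
    Tendsto (fun n => E.N (rearr α x - rearr α (u n))) atTop (𝓝 0)

/-- `x` is a point of lower `K`-monotonicity (`LKM` point). -/
def SymmetricBFS.IsLKMPoint (E : SymmetricBFS α) (x : ℝ → ℝ) : Prop :=
  ∀ y : ℝ → ℝ, E.Mem y → HLP α y x → rearr α y ≠ rearr α x → E.N y < E.N x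

/-- `x` is a point of order continuity. -/
def SymmetricBFS.IsOCPoint (E : SymmetricBFS α) (x : ℝ → ℝ) : Prop :=
  ∀ u : ℕ → ℝ → ℝ, (∀ n, E.Mem (u n)) →
    (∀ n, ∀ᵐ s ∂(muI α), 0 ≤ u n s ∧ u n s ≤ |x s|) →
    (∀ᵐ s ∂(muI α), Tendsto (fun n => u n s) atTop (𝓝 0)) →
    Tendsto (fun n => E.N (u n)) atTop (𝓝 0)

/-- `x` is a point of `K`-order continuity. -/
def SymmetricBFS.IsKOCPoint (E : SymmetricBFS α) (x : ℝ → ℝ) : Prop :=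
  ∀ u : ℕ → ℝ → ℝ, (∀ n, E.Mem (u n)) → (∀ n, HLP α (u n) x) →
    (∀ᵐ s ∂(muI α), Tendsto (fun n => rearr α (u n) s) atTop (𝓝 0)) →
    Tendsto (fun n => E.N (u n)) atTop (𝓝 0)

/-- `x` is an `H_g` point (Kadec–Klee point for global convergence in measure). -/
def SymmetricBFS.IsHgPoint (E : SymmetricBFS α) (x : ℝ → ℝ) : Prop :=
  ∀ u : ℕ → ℝ → ℝ, (∀ n, E.Mem (u n)) →
    TendstoInMeasure (muI α) u atTop x →
    Tendsto (fun n => E.N (u n)) atTop (𝓝 (E.N x)) →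
    Tendsto (fun n => E.N (u n - x)) atTop (𝓝 0)

/-- `x` is an `H_l` point (Kadec–Klee point for local convergence in measure). -/
def SymmetricBFS.IsHlPoint (E : SymmetricBFS α) (x : ℝ → ℝ) : Prop :=
  ∀ u : ℕ → ℝ → ℝ, (∀ n, E.Mem (u n)) →
    (∀ A : Set ℝ, muI α A < ∞ → TendstoInMeasure ((muI α).restrict A) u atTop x) →
    Tendsto (fun n => E.N (u n)) atTop (𝓝 (E.N x)) →
    Tendsto (fun n => E.N (u n - x)) atTop (𝓝 0)

/-- A nonnegative `x` is an `LLUM` point (point of lower local uniform monotonicity). -/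
def SymmetricBFS.IsLLUMPoint (E : SymmetricBFS α) (x : ℝ → ℝ) : Prop :=
  ∀ u : ℕ → ℝ → ℝ, (∀ n, E.Mem (u n)) →
    (∀ n, ∀ᵐ s ∂(muI α), 0 ≤ u n s ∧ u n s ≤ x s) →
    Tendsto (fun n => E.N (u n)) atTop (𝓝 (E.N x)) →
    Tendsto (fun n => E.N (u n - x)) atTop (𝓝 0)

/-- A nonnegative `x` is a `ULUM` point (point of upper local uniform monotonicity). -/
def SymmetricBFS.IsULUMPoint (E : SymmetricBFS α) (x : ℝ → ℝ) : Prop :=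
  ∀ u : ℕ → ℝ → ℝ, (∀ n, E.Mem (u n)) →
    (∀ n, ∀ᵐ s ∂(muI α), x s ≤ u n s) →
    Tendsto (fun n => E.N (u n)) atTop (𝓝 (E.N x)) →
    Tendsto (fun n => E.N (u n - x)) atTop (𝓝 0)

namespace LLUKMaux

lemma muI_top : muI ⊤ = volume.restrict (Set.Ici 0) := by
  unfold muI
  congr 1
  ext s
  simp [ENNReal.ofReal_lt_top]

lemma muI_top_apply (A : Set ℝ) : muI ⊤ A = volume (A ∩ Set.Ici 0) := by
  rw [muI_top, Measure.restrict_apply' measurableSet_Ici]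

lemma ae_pos : ∀ᵐ s ∂(muI ⊤), 0 < s := by
  rw [ae_iff]
  rw [muI_top_apply]
  refine measure_mono_null (fun s hs => ?_) (Real.volume_singleton (a := (0:ℝ)))
  simp only [mem_inter_iff, mem_setOf_eq, not_lt, mem_Ici] at hs
  simp [le_antisymm hs.1 hs.2]

lemma distr_antitone (x : ℝ → ℝ) : Antitone (distr ⊤ x) := fun a b hab =>
  measure_mono (fun s hs => lt_of_le_of_lt hab hs)

lemma rearr_nonneg (a : ℝ≥0∞) (x : ℝ → ℝ) (t : ℝ) : 0 ≤ rearr a x t :=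
  Real.sInf_nonneg fun _ h => h.1.le

lemma rearr_bddBelow (a : ℝ≥0∞) (x : ℝ → ℝ) (t : ℝ) :
    BddBelow {lam : ℝ | 0 < lam ∧ distr a x lam ≤ ENNReal.ofReal t} :=
  ⟨0, fun _ h => h.1.le⟩

/-- a nonneg function vanishing on `(-∞,0]`, antitone and "right-continuous" on `(0,∞)`
equals its own decreasing rearrangement on `(0,∞)`. -/
lemma rearr_eq_self (f : ℝ → ℝ)
    (h0 : ∀ s : ℝ, s ≤ 0 → f s = 0)
    (hnn : ∀ s, 0 ≤ f s)
    (hanti : ∀ s s' : ℝ, 0 < s → s ≤ s' → f s' ≤ f s)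
    (hrc : ∀ t : ℝ, 0 < t → ∀ lam : ℝ, lam < f t → ∃ t', t < t' ∧ lam < f t')
    (t : ℝ) (ht : 0 < t) : rearr ⊤ f t = f t := by
  have claim1 : ∀ lam : ℝ, 0 < lam → f t ≤ lam → distr ⊤ f lam ≤ ENNReal.ofReal t := by
    intro lam hlam hfl
    rw [distr, muI_top_apply]
    have hsub : {s : ℝ | lam < |f s|} ∩ Set.Ici 0 ⊆ Set.Ico 0 t := by
      intro s hs
      rcases hs with ⟨hs1, hs2⟩
      simp only [mem_setOf_eq, abs_of_nonneg (hnn s)] at hs1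
      constructor
      · exact hs2
      · by_contra hst
        push_neg at hst
        exact absurd hs1 (not_lt.2 ((hanti t s ht hst).trans hfl))
    calc volume ({s : ℝ | lam < |f s|} ∩ Set.Ici 0) ≤ volume (Set.Ico 0 t) :=
          measure_mono hsub
      _ = ENNReal.ofReal t := by rw [Real.volume_Ico, sub_zero]
  refine le_antisymm ?_ ?_
  · -- rearr ≤ f t
    refine le_of_forall_pos_le_add ?_
    intro ε hε
    refine csInf_le (rearr_bddBelow _ _ _) ?_
    exact ⟨by linarith [hnn t], claim1 _ (by linarith [hnn t]) (by linarith)⟩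
  · -- f t ≤ rearr
    rcases le_or_gt (f t) 0 with hft | hft
    · exact hft.trans (rearr_nonneg _ _ _)
    · refine le_csInf ⟨f t, hft, claim1 _ hft le_rfl⟩ ?_
      rintro lam ⟨hlam, hdl⟩
      by_contra hc
      push_neg at hc
      obtain ⟨t', ht', hft'⟩ := hrc t ht lam hc
      have hsub : Set.Ioc 0 t' ⊆ {s : ℝ | lam < |f s|} := by
        intro s hs
        have : f t' ≤ f s := hanti s t' hs.1 hs.2
        simp only [mem_setOf_eq, abs_of_nonneg (hnn s)]
        linarith
      have hge : ENNReal.ofReal t' ≤ distr ⊤ f lam := by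
        rw [distr, muI_top_apply]
        calc ENNReal.ofReal t' = volume (Set.Ioc (0:ℝ) t') := by
              rw [Real.volume_Ioc, sub_zero]
          _ ≤ volume ({s : ℝ | lam < |f s|} ∩ Set.Ici 0) := by
              refine measure_mono (fun s hs => ⟨hsub hs, le_of_lt hs.1⟩)
      have : ENNReal.ofReal t' ≤ ENNReal.ofReal t := hge.trans hdl
      rw [ENNReal.ofReal_le_ofReal_iff ht.le] at this
      linarith

variable {x : ℝ → ℝ}

/-- In "Case B", the defining set of the rearrangement is nonempty for every `t > 0`. -/
lemma S_nonempty (hxm : AEMeasurable x (muI ⊤))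
    (lam0 : ℝ) (hlam0 : 0 < lam0) (hB : distr ⊤ x lam0 ≠ ⊤) :
    ∀ t : ℝ, 0 < t → ∃ lam : ℝ, 0 < lam ∧ distr ⊤ x lam ≤ ENNReal.ofReal t := by
  intro t ht
  set A : ℕ → Set ℝ := fun k => {s : ℝ | lam0 + k < |x s|} with hA
  have hnull : ∀ k, NullMeasurableSet (A k) (muI ⊤) := by
    intro k
    exact (continuous_abs.measurable.comp_aemeasurable hxm).nullMeasurable measurableSet_Ioi
  have hantiA : Antitone A := by
    intro k k' hkk s hs
    simp only [hA, mem_setOf_eq] at hs ⊢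
    have : (k : ℝ) ≤ k' := Nat.cast_le.2 hkk
    linarith
  have hfin : ∃ k, muI ⊤ (A k) ≠ ⊤ := by
    refine ⟨0, ne_top_of_le_ne_top hB (measure_mono fun s hs => ?_)⟩
    simp only [hA, Nat.cast_zero, add_zero, mem_setOf_eq] at hs
    exact hs
  have hempty : (⋂ k, A k) = ∅ := by
    ext s
    simp only [mem_iInter, mem_empty_iff_false, iff_false, not_forall, hA, mem_setOf_eq, not_lt]
    obtain ⟨k, hk⟩ := exists_nat_ge (|x s|)
    exact ⟨k, by linarith⟩
  have htend : Tendsto (fun k => muI ⊤ (A k)) atTop (𝓝 0) := by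
    have := MeasureTheory.tendsto_measure_iInter_atTop hnull hantiA hfin
    rw [hempty] at this
    simpa [Function.comp_def] using this
  have hpos : (0 : ℝ≥0∞) < ENNReal.ofReal t := ENNReal.ofReal_pos.2 ht
  obtain ⟨k, hk⟩ := (htend.eventually_lt_const hpos).exists
  exact ⟨lam0 + k, by positivity, hk.le⟩

lemma rearr_anti (hne : ∀ t : ℝ, 0 < t → ∃ lam : ℝ, 0 < lam ∧ distr ⊤ x lam ≤ ENNReal.ofReal t) :
    ∀ t t' : ℝ, 0 < t → t ≤ t' → rearr ⊤ x t' ≤ rearr ⊤ x t := by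
  intro t t' ht htt'
  refine csInf_le_csInf (rearr_bddBelow _ _ _) (hne t ht) ?_
  rintro lam ⟨h1, h2⟩
  exact ⟨h1, h2.trans (ENNReal.ofReal_le_ofReal htt')⟩

lemma rearr_rc (hne : ∀ t : ℝ, 0 < t → ∃ lam : ℝ, 0 < lam ∧ distr ⊤ x lam ≤ ENNReal.ofReal t) :
    ∀ t : ℝ, 0 < t → ∀ lam : ℝ, lam < rearr ⊤ x t → ∃ t', t < t' ∧ lam < rearr ⊤ x t' := by
  intro t ht lam hlam
  by_contra hc
  push_neg at hc
  have hlam0 : 0 ≤ lam := (rearr_nonneg ⊤ x (t + 1)).trans (hc (t + 1) (by linarith))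
  set lam'' : ℝ := (lam + rearr ⊤ x t) / 2 with hlam''
  have h1 : lam < lam'' := by rw [hlam'']; linarith
  have h2 : lam'' < rearr ⊤ x t := by rw [hlam'']; linarith
  have hdist : ∀ t' : ℝ, t < t' → distr ⊤ x lam'' ≤ ENNReal.ofReal t' := by
    intro t' htt'
    have hS : rearr ⊤ x t' < lam'' := lt_of_le_of_lt (hc t' htt') h1
    obtain ⟨mu, hmuS, hmul⟩ := exists_lt_of_csInf_lt
      (by obtain ⟨l, hl⟩ := hne t' (ht.trans htt'); exact ⟨l, hl⟩) hS
    exact (distr_antitone x hmul.le).trans hmuS.2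
  have hle : distr ⊤ x lam'' ≤ ENNReal.ofReal t := by
    have htt : Tendsto (fun n : ℕ => ENNReal.ofReal (t + 1 / (n + 1))) atTop
        (𝓝 (ENNReal.ofReal t)) := by
      have h3 : Tendsto (fun n : ℕ => t + 1 / ((n : ℝ) + 1)) atTop (𝓝 t) := by
        have := tendsto_one_div_add_atTop_nhds_zero_nat (𝕜 := ℝ)
        have := tendsto_const_nhds (x := t) (f := atTop (α := ℕ)) |>.add this
        simpa using this
      exact (ENNReal.continuous_ofReal.tendsto t).comp h3
    refine ge_of_tendsto' htt fun n => hdist _ ?_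
    have : (0:ℝ) < 1 / ((n:ℝ) + 1) := by positivity
    linarith
  have : rearr ⊤ x t ≤ lam'' := csInf_le (rearr_bddBelow _ _ _) ⟨by linarith, hle⟩
  linarith

lemma rearr_gt_iff (hne : ∀ t : ℝ, 0 < t → ∃ lam : ℝ, 0 < lam ∧ distr ⊤ x lam ≤ ENNReal.ofReal t)
    {t lam : ℝ} (ht : 0 < t) (hlam : 0 ≤ lam) :
    lam < rearr ⊤ x t ↔ ENNReal.ofReal t < distr ⊤ x lam := by
  constructor
  · intro h
    by_contra hc
    push_neg at hc
    rcases hlam.lt_or_eq with hpos | hzero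
    · exact absurd (csInf_le (rearr_bddBelow _ _ _) ⟨hpos, hc⟩) (not_le.2 h)
    · have : ∀ lam' : ℝ, 0 < lam' → rearr ⊤ x t ≤ lam' := by
        intro lam' hlam'
        refine csInf_le (rearr_bddBelow _ _ _) ⟨hlam', ?_⟩
        refine le_trans (distr_antitone x ?_) hc
        linarith
      have h0 : rearr ⊤ x t ≤ 0 := by
        refine le_of_forall_pos_le_add fun ε hε => ?_
        simpa using this ε hε
      rw [← hzero] at h
      linarith
  · intro h
    set B : ℕ → Set ℝ := fun k => {s : ℝ | lam + 1 / (k + 1) < |x s|} with hB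
    have hmono : Monotone B := by
      intro k k' hkk s hs
      simp only [hB, mem_setOf_eq] at hs ⊢
      have h1 : 1 / ((k' : ℝ) + 1) ≤ 1 / ((k : ℝ) + 1) := by
        apply one_div_le_one_div_of_le
        · positivity
        · exact_mod_cast by exact_mod_cast add_le_add_left (Nat.cast_le.2 hkk) 1
      linarith
    have hunion : (⋃ k, B k) = {s : ℝ | lam < |x s|} := by
      ext s
      simp only [mem_iUnion, hB, mem_setOf_eq]
      constructor
      · rintro ⟨k, hk⟩
        have : (0:ℝ) < 1 / ((k:ℝ) + 1) := by positivity
        linarith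
      · intro hs
        obtain ⟨k, hk⟩ := exists_nat_one_div_lt (by linarith : (0:ℝ) < |x s| - lam)
        exact ⟨k, by linarith⟩
    have htend : Tendsto (fun k => muI ⊤ (B k)) atTop (𝓝 (distr ⊤ x lam)) := by
      have := MeasureTheory.tendsto_measure_iUnion_atTop (μ := muI ⊤) hmono
      rw [hunion] at this
      exact this
    obtain ⟨k, hk⟩ := (htend.eventually_const_lt h).exists
    have hlb : lam + 1 / (k + 1) ≤ rearr ⊤ x t := by
      refine le_csInf (hne t ht) ?_
      rintro mu ⟨hmu1, hmu2⟩
      by_contra hcon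
      push_neg at hcon
      have : distr ⊤ x (lam + 1 / (k+1)) ≤ distr ⊤ x mu := distr_antitone x hcon.le
      have : muI ⊤ (B k) ≤ ENNReal.ofReal t := by
        refine le_trans ?_ hmu2
        exact this
      exact absurd this (not_le.2 hk)
    have : (0:ℝ) < 1 / ((k:ℝ) + 1) := by positivity
    linarith

/-- A nonnegative function vanishing on `(-∞,0]` and antitone on `(0,∞)` is measurable. -/
lemma measurable_of_antitoneOn (f : ℝ → ℝ)
    (h0 : ∀ s : ℝ, s ≤ 0 → f s = 0)
    (hnn : ∀ s, 0 ≤ f s)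
    (hanti : ∀ s s' : ℝ, 0 < s → s ≤ s' → f s' ≤ f s) :
    Measurable f := by
  refine measurable_of_Iio fun a => ?_
  rcases le_or_gt a 0 with ha | ha
  · have : f ⁻¹' Set.Iio a = ∅ := by
      ext s
      simp only [mem_preimage, mem_Iio, mem_empty_iff_false, iff_false, not_lt]
      exact ha.trans (hnn s)
    rw [this]; exact MeasurableSet.empty
  · have : f ⁻¹' Set.Iio a = Set.Iic 0 ∪ {s : ℝ | 0 < s ∧ f s < a} := by
      ext s
      simp only [mem_preimage, mem_Iio, mem_union, mem_Iic, mem_setOf_eq]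
      constructor
      · intro hs
        rcases le_or_gt s 0 with h | h
        · exact Or.inl h
        · exact Or.inr ⟨h, hs⟩
      · rintro (h | ⟨_, h⟩)
        · rw [h0 s h]; exact ha
        · exact h
    rw [this]
    refine measurableSet_Iic.union ?_
    refine Set.OrdConnected.measurableSet ⟨?_⟩
    rintro u ⟨hu1, hu2⟩ v ⟨hv1, _⟩ y ⟨hy1, _⟩
    exact ⟨lt_of_lt_of_le hu1 hy1, lt_of_le_of_lt (hanti u y hu1 hy1) hu2⟩

/-- Equimeasurability: the (cut-off) rearrangement has the same distribution as `x`. -/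
lemma distr_indicator_rearr_eq
    (hne : ∀ t : ℝ, 0 < t → ∃ lam : ℝ, 0 < lam ∧ distr ⊤ x lam ≤ ENNReal.ofReal t) :
    distr ⊤ (Set.indicator (Set.Ioi 0) (rearr ⊤ x)) = distr ⊤ x := by
  set g : ℝ → ℝ := rearr ⊤ x with hg
  set h : ℝ → ℝ := Set.indicator (Set.Ioi 0) g with hh
  have hnn : ∀ s, 0 ≤ h s := fun s =>
    Set.indicator_apply_nonneg (fun _ => rearr_nonneg _ _ _)
  funext lam
  rcases lt_or_ge lam 0 with hlam | hlam
  · have e1 : {s : ℝ | lam < |h s|} = Set.univ :=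
      Set.eq_univ_of_forall fun s => lt_of_lt_of_le hlam (abs_nonneg _)
    have e2 : {s : ℝ | lam < |x s|} = Set.univ :=
      Set.eq_univ_of_forall fun s => lt_of_lt_of_le hlam (abs_nonneg _)
    rw [distr, distr, e1, e2]
  · set D : ℝ≥0∞ := distr ⊤ x lam with hD
    have hset : {s : ℝ | lam < |h s|} ∩ Set.Ici 0 = {s : ℝ | 0 < s ∧ ENNReal.ofReal s < D} := by
      ext s
      simp only [mem_inter_iff, mem_setOf_eq, mem_Ici]
      constructor
      · rintro ⟨hs1, hs2⟩
        have hs0 : 0 < s := by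
          rcases hs2.lt_or_eq with h | h
          · exact h
          · exfalso
            rw [hh, ← h] at hs1
            simp only [Set.indicator_apply, mem_Ioi, lt_irrefl, if_false] at hs1
            rw [abs_zero] at hs1
            exact absurd hs1 (not_lt.2 hlam)
        have : h s = g s := Set.indicator_of_mem hs0 g
        rw [this, abs_of_nonneg (rearr_nonneg _ _ _)] at hs1
        exact ⟨hs0, (rearr_gt_iff hne hs0 hlam).1 hs1⟩
      · rintro ⟨hs0, hsD⟩
        have h1 : lam < g s := (rearr_gt_iff hne hs0 hlam).2 hsD
        have : h s = g s := Set.indicator_of_mem hs0 g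
        exact ⟨by rw [this, abs_of_nonneg (rearr_nonneg _ _ _)]; exact h1, hs0.le⟩
    rw [distr, muI_top_apply, hset]
    rcases eq_or_ne D ⊤ with hDt | hDt
    · have : {s : ℝ | 0 < s ∧ ENNReal.ofReal s < D} = Set.Ioi 0 := by
        ext s
        simp [hDt, ENNReal.ofReal_lt_top]
      rw [this, Real.volume_Ioi, hDt]
    · have : {s : ℝ | 0 < s ∧ ENNReal.ofReal s < D} = Set.Ioo 0 D.toReal := by
        ext s
        simp only [mem_setOf_eq, mem_Ioo]
        constructor
        · rintro ⟨h1, h2⟩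
          exact ⟨h1, (ENNReal.ofReal_lt_iff_lt_toReal h1.le hDt).1 h2⟩
        · rintro ⟨h1, h2⟩
          exact ⟨h1, (ENNReal.ofReal_lt_iff_lt_toReal h1.le hDt).2 h2⟩
      rw [this, Real.volume_Ioo, sub_zero, ENNReal.ofReal_toReal hDt]

lemma u_h0 (n : ℕ) : ∀ s : ℝ, s ≤ 0 →
    Set.indicator (Set.Ioo (0:ℝ) (n+1)) (rearr ⊤ x) s = 0 := fun s hs =>
  Set.indicator_of_notMem (fun hmem => absurd hmem.1 (not_lt.2 hs)) _

lemma u_nonneg (n : ℕ) (s : ℝ) : 0 ≤ Set.indicator (Set.Ioo (0:ℝ) (n+1)) (rearr ⊤ x) s :=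
  Set.indicator_apply_nonneg fun _ => rearr_nonneg _ _ _

lemma u_anti (hne : ∀ t : ℝ, 0 < t → ∃ lam : ℝ, 0 < lam ∧ distr ⊤ x lam ≤ ENNReal.ofReal t)
    (n : ℕ) : ∀ s s' : ℝ, 0 < s → s ≤ s' →
    Set.indicator (Set.Ioo (0:ℝ) (n+1)) (rearr ⊤ x) s' ≤
      Set.indicator (Set.Ioo (0:ℝ) (n+1)) (rearr ⊤ x) s := by
  intro s s' hs hss'
  rcases lt_or_ge s' ((n:ℝ)+1) with h | h
  · have e1 : s' ∈ Set.Ioo (0:ℝ) ((n:ℝ)+1) := ⟨lt_of_lt_of_le hs hss', h⟩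
    have e2 : s ∈ Set.Ioo (0:ℝ) ((n:ℝ)+1) := ⟨hs, lt_of_le_of_lt hss' h⟩
    rw [Set.indicator_of_mem e1, Set.indicator_of_mem e2]
    exact rearr_anti hne s s' hs hss'
  · rw [Set.indicator_of_notMem (fun hmem => absurd hmem.2 (not_lt.2 h)) _]
    exact u_nonneg n s

lemma u_rearr_eq (hne : ∀ t : ℝ, 0 < t → ∃ lam : ℝ, 0 < lam ∧ distr ⊤ x lam ≤ ENNReal.ofReal t)
    (n : ℕ) (t : ℝ) (ht : 0 < t) :
    rearr ⊤ (Set.indicator (Set.Ioo (0:ℝ) (n+1)) (rearr ⊤ x)) t =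
      Set.indicator (Set.Ioo (0:ℝ) (n+1)) (rearr ⊤ x) t := by
  set u := Set.indicator (Set.Ioo (0:ℝ) (n+1)) (rearr ⊤ x) with hu
  refine rearr_eq_self u (u_h0 n) (u_nonneg n) (u_anti hne n) ?_ t ht
  intro τ hτ lam hlam
  by_cases hmem : τ ∈ Set.Ioo (0:ℝ) ((n:ℝ)+1)
  · rw [hu, Set.indicator_of_mem hmem] at hlam
    obtain ⟨t₀, ht₀, hlt⟩ := rearr_rc hne τ hτ lam hlam
    refine ⟨min t₀ ((τ + ((n:ℝ)+1)) / 2), ?_, ?_⟩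
    · exact lt_min ht₀ (by rcases hmem with ⟨_, h2⟩; linarith)
    · have hpos : 0 < min t₀ ((τ + ((n:ℝ)+1)) / 2) := lt_min (hτ.trans ht₀) (by
        rcases hmem with ⟨h1, _⟩; positivity)
      have hmem' : min t₀ ((τ + ((n:ℝ)+1)) / 2) ∈ Set.Ioo (0:ℝ) ((n:ℝ)+1) := by
        refine ⟨hpos, ?_⟩
        rcases hmem with ⟨_, h2⟩
        calc min t₀ ((τ + ((n:ℝ)+1)) / 2) ≤ (τ + ((n:ℝ)+1)) / 2 := min_le_right _ _
          _ < (n:ℝ)+1 := by linarith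
      rw [hu, Set.indicator_of_mem hmem']
      exact lt_of_lt_of_le hlt (rearr_anti hne _ t₀ hpos (min_le_left _ _))
  · rw [hu, Set.indicator_of_notMem hmem] at hlam
    exact ⟨τ + 1, by linarith, lt_of_lt_of_le hlam (u_nonneg n (τ+1))⟩

lemma u_measurable (n : ℕ)
    (hne : ∀ t : ℝ, 0 < t → ∃ lam : ℝ, 0 < lam ∧ distr ⊤ x lam ≤ ENNReal.ofReal t) :
    Measurable (Set.indicator (Set.Ioo (0:ℝ) (n+1)) (rearr ⊤ x)) :=
  measurable_of_antitoneOn _ (u_h0 n) (u_nonneg n) (u_anti hne n)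

lemma h_h0 : ∀ s : ℝ, s ≤ 0 → Set.indicator (Set.Ioi (0:ℝ)) (rearr ⊤ x) s = 0 := fun s hs =>
  Set.indicator_of_notMem (fun hmem => absurd hmem (not_lt.2 hs)) _

lemma h_nonneg (s : ℝ) : 0 ≤ Set.indicator (Set.Ioi (0:ℝ)) (rearr ⊤ x) s :=
  Set.indicator_apply_nonneg fun _ => rearr_nonneg _ _ _

lemma h_anti (hne : ∀ t : ℝ, 0 < t → ∃ lam : ℝ, 0 < lam ∧ distr ⊤ x lam ≤ ENNReal.ofReal t) :
    ∀ s s' : ℝ, 0 < s → s ≤ s' →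
    Set.indicator (Set.Ioi (0:ℝ)) (rearr ⊤ x) s' ≤ Set.indicator (Set.Ioi (0:ℝ)) (rearr ⊤ x) s := by
  intro s s' hs hss'
  have e1 : s' ∈ Set.Ioi (0:ℝ) := lt_of_lt_of_le hs hss'
  have e2 : s ∈ Set.Ioi (0:ℝ) := hs
  rw [Set.indicator_of_mem e1, Set.indicator_of_mem e2]
  exact rearr_anti hne s s' hs hss'

lemma h_measurable
    (hne : ∀ t : ℝ, 0 < t → ∃ lam : ℝ, 0 < lam ∧ distr ⊤ x lam ≤ ENNReal.ofReal t) :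
    Measurable (Set.indicator (Set.Ioi (0:ℝ)) (rearr ⊤ x)) :=
  measurable_of_antitoneOn _ h_h0 h_nonneg (h_anti hne)

lemma hlp_u (hne : ∀ t : ℝ, 0 < t → ∃ lam : ℝ, 0 < lam ∧ distr ⊤ x lam ≤ ENNReal.ofReal t)
    (n : ℕ) : HLP ⊤ (Set.indicator (Set.Ioo (0:ℝ) (n+1)) (rearr ⊤ x)) x := by
  intro t ht
  set g : ℝ → ℝ := rearr ⊤ x with hgdef
  set u : ℝ → ℝ := Set.indicator (Set.Ioo (0:ℝ) (n+1)) g with hudef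
  have hcongr : (∫ s in Set.Ioc (0:ℝ) t, rearr ⊤ u s) = ∫ s in Set.Ioc (0:ℝ) t, u s :=
    MeasureTheory.setIntegral_congr_fun measurableSet_Ioc fun s hs => u_rearr_eq hne n s hs.1
  rw [maxf, maxf, hcongr]
  have hub : ∀ s : ℝ, 0 < s → |u s| ≤ g s := by
    intro s hs
    rw [abs_of_nonneg (u_nonneg n s)]
    by_cases hmem : s ∈ Set.Ioo (0:ℝ) ((n:ℝ)+1)
    · rw [Set.indicator_of_mem hmem]
    · rw [Set.indicator_of_notMem hmem]
      exact rearr_nonneg _ _ _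
  by_cases hInt : IntegrableOn g (Set.Ioc 0 t) volume
  · have hu_int : IntegrableOn u (Set.Ioc 0 t) volume := by
      refine MeasureTheory.Integrable.mono' hInt (u_measurable n hne).aestronglyMeasurable ?_
      refine (ae_restrict_iff' measurableSet_Ioc).2 (ae_of_all _ fun s hs => ?_)
      exact hub s hs.1
    have : (∫ s in Set.Ioc (0:ℝ) t, u s) ≤ ∫ s in Set.Ioc (0:ℝ) t, g s := by
      refine MeasureTheory.setIntegral_mono_on hu_int hInt measurableSet_Ioc fun s hs => ?_
      have := hub s hs.1
      rwa [abs_of_nonneg (u_nonneg n s)] at this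
    gcongr
  · have hgz : (∫ s in Set.Ioc (0:ℝ) t, g s) = 0 := MeasureTheory.integral_undef hInt
    have huz : (∫ s in Set.Ioc (0:ℝ) t, u s) = 0 := by
      refine MeasureTheory.integral_undef fun hu_int => ?_
      rcases le_or_gt t ((n:ℝ)+1) with hle | hlt
      · -- u = g a.e. on Ioc 0 t
        have hae : u =ᶠ[ae (volume.restrict (Set.Ioc (0:ℝ) t))] g := by
          have h1 : ∀ᵐ s ∂(volume.restrict (Set.Ioc (0:ℝ) t)), s ≠ (n:ℝ)+1 := by
            refine ae_restrict_of_ae ?_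
            rw [ae_iff]
            refine measure_mono_null (fun s hs => ?_) (Real.volume_singleton (a := (n:ℝ)+1))
            simpa using not_not.1 hs
          filter_upwards [h1, ae_restrict_mem measurableSet_Ioc] with s hsne hs
          have : s ∈ Set.Ioo (0:ℝ) ((n:ℝ)+1) := ⟨hs.1, lt_of_le_of_ne (hs.2.trans hle) hsne⟩
          rw [hudef, Set.indicator_of_mem this]
        exact hInt (hu_int.congr hae)
      · -- t > n+1
        have h1 : IntegrableOn u (Set.Ioo (0:ℝ) ((n:ℝ)+1)) volume :=
          MeasureTheory.IntegrableOn.mono_set hu_int fun s hs => ⟨hs.1, le_of_lt (hs.2.trans hlt)⟩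
        have h2 : IntegrableOn g (Set.Ioo (0:ℝ) ((n:ℝ)+1)) volume := by
          refine h1.congr ?_
          refine (ae_restrict_iff' measurableSet_Ioo).2 (ae_of_all _ fun s hs => ?_)
          rw [hudef, Set.indicator_of_mem hs]
        have h3 : IntegrableOn g (Set.Icc ((n:ℝ)+1) t) volume := by
          have hconst : IntegrableOn (fun _ : ℝ => g ((n:ℝ)+1)) (Set.Icc ((n:ℝ)+1) t) volume := by
            rw [MeasureTheory.integrableOn_const_iff]
            right
            rw [Real.volume_Icc]
            exact ENNReal.ofReal_lt_top
          refine MeasureTheory.Integrable.mono' hconst ?_ ?_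
          · refine ((h_measurable hne).aestronglyMeasurable (μ := volume.restrict _)).congr ?_
            refine (ae_restrict_iff' measurableSet_Icc).2 (ae_of_all _ fun s hs => ?_)
            have hs0 : s ∈ Set.Ioi (0:ℝ) := lt_of_lt_of_le (by positivity) hs.1
            rw [Set.indicator_of_mem hs0]
          · refine (ae_restrict_iff' measurableSet_Icc).2 (ae_of_all _ fun s hs => ?_)
            rw [Real.norm_eq_abs, abs_of_nonneg (rearr_nonneg _ _ _)]
            exact rearr_anti hne _ s (by positivity) hs.1
        have h4 : IntegrableOn g (Set.Ioc (0:ℝ) t) volume := by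
          refine MeasureTheory.IntegrableOn.mono_set
            (MeasureTheory.integrableOn_union.2 ⟨h2, h3⟩) fun s hs => ?_
          rcases lt_or_ge s ((n:ℝ)+1) with h | h
          · exact Or.inl ⟨hs.1, h⟩
          · exact Or.inr ⟨h, hs.2⟩
        exact hInt h4
    rw [hgz, huz]

lemma distr_indicator_const_eq (c : ℝ) (hc : 0 < c) (a : ℝ) (ha : 0 ≤ a) :
    distr ⊤ (Set.indicator (Set.Ici a) (fun _ => c)) =
      distr ⊤ (Set.indicator (Set.Ioi 0) (fun _ => c)) := by
  funext lam
  rcases lt_or_ge lam 0 with hl | hl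
  · have e1 : {s : ℝ | lam < |Set.indicator (Set.Ici a) (fun _ => c) s|} = Set.univ :=
      Set.eq_univ_of_forall fun s => lt_of_lt_of_le hl (abs_nonneg _)
    have e2 : {s : ℝ | lam < |Set.indicator (Set.Ioi 0) (fun _ => c) s|} = Set.univ :=
      Set.eq_univ_of_forall fun s => lt_of_lt_of_le hl (abs_nonneg _)
    rw [distr, distr, e1, e2]
  · rcases lt_or_ge lam c with hlc | hlc
    · have e1 : {s : ℝ | lam < |Set.indicator (Set.Ici a) (fun _ => c) s|} = Set.Ici a := by
        ext s
        simp only [Set.mem_setOf_eq, Set.mem_Ici]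
        constructor
        · intro hs
          by_contra hcon
          rw [Set.indicator_of_notMem (by simpa using hcon), abs_zero] at hs
          exact absurd hs (not_lt.2 hl)
        · intro hs
          have e : Set.indicator (Set.Ici a) (fun _ => c) s = c :=
            Set.indicator_of_mem (Set.mem_Ici.2 hs) _
          rw [e, abs_of_nonneg hc.le]
          exact hlc
      have e2 : {s : ℝ | lam < |Set.indicator (Set.Ioi 0) (fun _ => c) s|} = Set.Ioi (0:ℝ) := by
        ext s
        simp only [Set.mem_setOf_eq, Set.mem_Ioi]
        constructor
        · intro hs
          by_contra hcon
          rw [Set.indicator_of_notMem (by simpa using hcon), abs_zero] at hs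
          exact absurd hs (not_lt.2 hl)
        · intro hs
          have e : Set.indicator (Set.Ioi 0) (fun _ => c) s = c :=
            Set.indicator_of_mem (Set.mem_Ioi.2 hs) _
          rw [e, abs_of_nonneg hc.le]
          exact hlc
      rw [distr, distr, e1, e2, muI_top_apply, muI_top_apply]
      have hsub1 : Set.Ici a ⊆ Set.Ici (0:ℝ) := fun s hs => le_trans ha hs
      rw [Set.inter_eq_self_of_subset_left hsub1,
        Set.inter_eq_self_of_subset_left Set.Ioi_subset_Ici_self,
        Real.volume_Ici, Real.volume_Ioi]
    · have e1 : {s : ℝ | lam < |Set.indicator (Set.Ici a) (fun _ => c) s|} = (∅ : Set ℝ) := by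
        rw [Set.eq_empty_iff_forall_notMem]
        intro s hs
        simp only [Set.mem_setOf_eq] at hs
        have hb : |Set.indicator (Set.Ici a) (fun _ => c) s| ≤ c := by
          by_cases hmem : s ∈ Set.Ici a
          · rw [Set.indicator_of_mem hmem, abs_of_nonneg hc.le]
          · rw [Set.indicator_of_notMem hmem, abs_zero]
            exact hc.le
        linarith
      have e2 : {s : ℝ | lam < |Set.indicator (Set.Ioi 0) (fun _ => c) s|} = (∅ : Set ℝ) := by
        rw [Set.eq_empty_iff_forall_notMem]
        intro s hs
        simp only [Set.mem_setOf_eq] at hs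
        have hb : |Set.indicator (Set.Ioi 0) (fun _ => c) s| ≤ c := by
          by_cases hmem : s ∈ Set.Ioi (0:ℝ)
          · rw [Set.indicator_of_mem hmem, abs_of_nonneg hc.le]
          · rw [Set.indicator_of_notMem hmem, abs_zero]
            exact hc.le
        linarith
      rw [distr, distr, e1, e2]

end LLUKMaux

open LLUKMaux in
/-- If `x ∈ E` is an `LLUKM` point of a symmetric Banach function space `E`
on `I = [0, α)` (with the Fatou property), then `x*(∞) = 0`. -/
theorem llukm_point_rearr_infty_zero (α : ℝ≥0∞) (hα : α = 1 ∨ α = ∞)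
    (E : SymmetricBFS α) (x : ℝ → ℝ) (hx : E.Mem x)
    (hLLUKM : E.IsLLUKMPoint x) :
    rearrInftyZero α x := by
  intro htop
  subst htop
  by_cases hA : ∀ lam : ℝ, 0 < lam → distr ⊤ x lam = ⊤
  · have hz : rearr ⊤ x = fun _ => 0 := by
      funext t
      rw [rearr]
      convert Real.sInf_empty using 2
      rw [Set.eq_empty_iff_forall_notMem]
      rintro lam ⟨h1, h2⟩
      rw [hA lam h1, top_le_iff] at h2
      exact ENNReal.ofReal_ne_top h2
    rw [hz]
    exact tendsto_const_nhds
  · push_neg at hA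
    obtain ⟨lam0, hlam0, hB⟩ := hA
    have hxm : AEMeasurable x (muI ⊤) := E.mem_aemeasurable hx
    have hne := S_nonempty hxm lam0 hlam0 hB
    set g : ℝ → ℝ := rearr ⊤ x with hgdef
    set G : ℝ → ℝ := fun t => g (max t 1) with hG
    have hGanti : Antitone G := fun t t' htt' =>
      rearr_anti hne _ _ (lt_of_lt_of_le one_pos (le_max_right t 1)) (max_le_max htt' le_rfl)
    have hGbdd : BddBelow (Set.range G) := ⟨0, by rintro y ⟨t, rfl⟩; exact rearr_nonneg _ _ _⟩
    have hGtend : Tendsto G atTop (𝓝 (⨅ t, G t)) := tendsto_atTop_ciInf hGanti hGbdd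
    set c : ℝ := ⨅ t, G t with hc
    have hgG : g =ᶠ[atTop] G := by
      filter_upwards [eventually_ge_atTop (1:ℝ)] with t ht
      show g t = g (max t 1)
      rw [max_eq_left ht]
    have hgtend : Tendsto g atTop (𝓝 c) := Tendsto.congr' hgG.symm hGtend
    have hc0 : 0 ≤ c := le_ciInf fun t => rearr_nonneg _ _ _
    rcases hc0.lt_or_eq with hcpos | hczero
    swap
    · rw [← hczero] at hgtend
      exact hgtend
    exfalso
    have hcle : ∀ s : ℝ, 0 < s → c ≤ g s := by
      intro s hs
      rcases le_or_gt 1 s with hle1 | hlt1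
      · have h1 : c ≤ G s := ciInf_le hGbdd s
        have h2 : G s = g s := by show g (max s 1) = g s; rw [max_eq_left hle1]
        rwa [h2] at h1
      · have h1 : c ≤ G 1 := ciInf_le hGbdd (1:ℝ)
        have h2 : G 1 = g 1 := by show g (max 1 1) = g 1; rw [max_self]
        rw [h2] at h1
        exact h1.trans (rearr_anti hne s 1 hs hlt1.le)
    set h : ℝ → ℝ := Set.indicator (Set.Ioi 0) g with hh
    set u : ℕ → ℝ → ℝ := fun n => Set.indicator (Set.Ioo (0:ℝ) (n+1)) g with hudef
    have hhm : AEMeasurable h (muI ⊤) := (h_measurable hne).aemeasurable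
    have hdistr : distr ⊤ h = distr ⊤ x := distr_indicator_rearr_eq hne
    obtain ⟨hMemh, hNh⟩ := E.symmetric hhm hx hdistr
    have hum : ∀ n, AEMeasurable (u n) (muI ⊤) := fun n => (u_measurable n hne).aemeasurable
    have hhval : ∀ s : ℝ, 0 < s → h s = g s := fun s hs =>
      Set.indicator_of_mem (Set.mem_Ioi.2 hs) g
    have huleh : ∀ n s, u n s ≤ h s := by
      intro n s
      show (Set.Ioo (0:ℝ) ((n:ℝ)+1)).indicator g s ≤ (Set.Ioi (0:ℝ)).indicator g s
      by_cases hmem : s ∈ Set.Ioo (0:ℝ) ((n:ℝ)+1)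
      · rw [Set.indicator_of_mem hmem, Set.indicator_of_mem (Set.mem_Ioi.2 hmem.1)]
      · rw [Set.indicator_of_notMem hmem]
        exact h_nonneg s
    have hub : ∀ n s, |u n s| ≤ |h s| := by
      intro n s
      have h1 : (0:ℝ) ≤ u n s := u_nonneg n s
      have h2 : (0:ℝ) ≤ h s := h_nonneg s
      rw [abs_of_nonneg h1, abs_of_nonneg h2]
      exact huleh n s
    have hMemu : ∀ n, E.Mem (u n) ∧ E.N (u n) ≤ E.N h := fun n =>
      E.ideal (hum n) hMemh (Filter.Eventually.of_forall (hub n))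
    have hmono : ∀ n, ∀ s : ℝ, u n s ≤ u (n+1) s := by
      intro n s
      show (Set.Ioo (0:ℝ) ((n:ℝ)+1)).indicator g s ≤
        (Set.Ioo (0:ℝ) (((n+1:ℕ):ℝ)+1)).indicator g s
      by_cases hmem : s ∈ Set.Ioo (0:ℝ) ((n:ℝ)+1)
      · have hmem2 : s ∈ Set.Ioo (0:ℝ) (((n+1:ℕ):ℝ)+1) := by
          refine ⟨hmem.1, lt_of_lt_of_le hmem.2 ?_⟩
          push_cast
          linarith
        rw [Set.indicator_of_mem hmem, Set.indicator_of_mem hmem2]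
      · rw [Set.indicator_of_notMem hmem]
        exact u_nonneg (n+1) s
    have hptw : ∀ s : ℝ, Tendsto (fun n => u n s) atTop (𝓝 (h s)) := by
      intro s
      rcases le_or_gt s 0 with hs0 | hs0
      · have e1 : (fun n => u n s) = fun _ => h s := by
          funext n
          show (Set.Ioo (0:ℝ) ((n:ℝ)+1)).indicator g s = (Set.Ioi (0:ℝ)).indicator g s
          have e2 : (Set.Ioo (0:ℝ) ((n:ℝ)+1)).indicator g s = 0 := u_h0 n s hs0
          have e3 : (Set.Ioi (0:ℝ)).indicator g s = 0 := h_h0 s hs0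
          rw [e2, e3]
        rw [e1]
        exact tendsto_const_nhds
      · obtain ⟨m, hm⟩ := exists_nat_gt s
        refine Tendsto.congr' ?_ (tendsto_const_nhds (x := h s))
        filter_upwards [eventually_ge_atTop m] with n hn
        have hmem : s ∈ Set.Ioo (0:ℝ) ((n:ℝ)+1) := by
          refine ⟨hs0, lt_of_lt_of_le (lt_of_lt_of_le hm (Nat.cast_le.2 hn)) ?_⟩
          linarith
        show (Set.Ioi (0:ℝ)).indicator g s = (Set.Ioo (0:ℝ) ((n:ℝ)+1)).indicator g s
        rw [Set.indicator_of_mem hmem, Set.indicator_of_mem (Set.mem_Ioi.2 hs0)]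
    obtain ⟨-, hNtend⟩ := E.fatou u h (fun n => (hMemu n).1) hhm
      (fun n => Filter.Eventually.of_forall (u_nonneg n))
      (fun n => Filter.Eventually.of_forall (hmono n))
      (Filter.Eventually.of_forall hptw)
      ⟨E.N h, fun n => (hMemu n).2⟩
    rw [hNh] at hNtend
    have hLL := hLLUKM u (fun n => (hMemu n).1) (fun n => hlp_u hne n) hNtend
    set w : ℝ → ℝ := Set.indicator (Set.Ioi 0) (fun _ => c) with hw
    have hwm : AEMeasurable w (muI ⊤) := (measurable_const.indicator measurableSet_Ioi).aemeasurable
    have hwle : ∀ s, |w s| ≤ |h s| := by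
      intro s
      by_cases hmem : s ∈ Set.Ioi (0:ℝ)
      · have e1 : w s = c := Set.indicator_of_mem hmem _
        have e2 : h s = g s := hhval s hmem
        rw [e1, e2, abs_of_nonneg hcpos.le, abs_of_nonneg (rearr_nonneg _ _ _)]
        exact hcle s hmem
      · have e1 : w s = 0 := Set.indicator_of_notMem hmem _
        rw [e1, abs_zero]
        exact abs_nonneg _
    obtain ⟨hMemw, -⟩ := E.ideal hwm hMemh (Filter.Eventually.of_forall hwle)
    have hdpos : 0 < E.N w := by
      rcases (E.norm_nonneg' w).lt_or_eq with hlt | heq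
      · exact hlt
      · exfalso
        have hae0 := (E.norm_eq_zero_iff hMemw).1 heq.symm
        rw [ae_iff] at hae0
        have h1 : muI ⊤ (Set.Ioi 0) ≤ muI ⊤ {a | ¬ w a = 0} := by
          refine measure_mono fun s hs => ?_
          have e1 : w s = c := Set.indicator_of_mem hs _
          simp only [Set.mem_setOf_eq, e1]
          exact ne_of_gt hcpos
        rw [hae0] at h1
        rw [muI_top_apply, Set.inter_eq_self_of_subset_left Set.Ioi_subset_Ici_self,
          Real.volume_Ioi] at h1
        exact absurd h1 (by simp)
    have key : ∀ n : ℕ, E.N w ≤ E.N (rearr ⊤ (u n) - rearr ⊤ x) := by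
      intro n
      set y : ℝ → ℝ := rearr ⊤ (u n) - rearr ⊤ x with hy
      have hyae : y =ᶠ[ae (muI ⊤)] fun s => u n s - h s := by
        filter_upwards [ae_pos] with s hs
        show (rearr ⊤ (u n) - rearr ⊤ x) s = u n s - h s
        simp only [Pi.sub_apply]
        have e1 : rearr ⊤ (u n) s = u n s := u_rearr_eq hne n s hs
        have e2 : h s = g s := hhval s hs
        rw [e1, e2]
      have hym : AEMeasurable y (muI ⊤) :=
        (((u_measurable n hne).sub (h_measurable hne)).aemeasurable).congr hyae.symm
      have hybound : ∀ᵐ s ∂(muI ⊤), |y s| ≤ |h s| := by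
        filter_upwards [hyae] with s hseq
        have h1 : u n s ≤ h s := huleh n s
        have h2 : (0:ℝ) ≤ u n s := u_nonneg n s
        have h3 : (0:ℝ) ≤ h s := h_nonneg s
        rw [hseq, abs_of_nonneg h3, abs_le]
        exact ⟨by linarith, by linarith⟩
      obtain ⟨hMemy, -⟩ := E.ideal hym hMemh hybound
      set wn : ℝ → ℝ := Set.indicator (Set.Ici ((n:ℝ)+1)) (fun _ => c) with hwn
      have hwnm : AEMeasurable wn (muI ⊤) :=
        (measurable_const.indicator measurableSet_Ici).aemeasurable
      have hdwn : distr ⊤ wn = distr ⊤ w :=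
        distr_indicator_const_eq c hcpos ((n:ℝ)+1) (by positivity)
      obtain ⟨hMemwn, hNwn⟩ := E.symmetric hwnm hMemw hdwn
      have hcomp : ∀ᵐ s ∂(muI ⊤), |wn s| ≤ |y s| := by
        filter_upwards [hyae, ae_pos] with s hseq hs
        rw [hseq]
        by_cases hmem : s ∈ Set.Ici ((n:ℝ)+1)
        · have e1 : wn s = c := Set.indicator_of_mem hmem _
          have hu0 : u n s = 0 :=
            Set.indicator_of_notMem (fun hm => absurd hm.2 (not_lt.2 hmem)) _
          have h3 : (0:ℝ) ≤ h s := h_nonneg s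
          rw [e1, hu0, zero_sub, abs_neg, abs_of_nonneg h3, abs_of_nonneg hcpos.le]
          have e2 : h s = g s := hhval s hs
          rw [e2]
          exact hcle s hs
        · have e1 : wn s = 0 := Set.indicator_of_notMem hmem _
          rw [e1, abs_zero]
          exact abs_nonneg _
      have hfin := (E.ideal hwnm hMemy hcomp).2
      rw [hNwn] at hfin
      exact hfin
    have hcontr : E.N w ≤ 0 := ge_of_tendsto' hLL key
    linarith
end
end

section
/- Let E be a symmetric Banach function space on I=[0,α) with the Fatou property and let φ be the fundamental function of E. If x∈E is an LLUKM point and x*(t)φ(t)→0 as t→0⁺, then x is a point of order continuity. -/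
open MeasureTheory Filter Topology Set
open scoped ENNReal

noncomputable section

variable {α : ℝ≥0∞}

namespace OCProof

variable {α : ℝ≥0∞}

lemma ISet_one (h : α = 1) :
    {s : ℝ | 0 ≤ s ∧ ENNReal.ofReal s < α} = Ico (0:ℝ) 1 := by
  subst h; ext s
  simp only [Set.mem_setOf_eq, Set.mem_Ico, ENNReal.ofReal_lt_one]

lemma ISet_top (h : α = ∞) :
    {s : ℝ | 0 ≤ s ∧ ENNReal.ofReal s < α} = Ici (0:ℝ) := by
  subst h; ext s
  simp only [Set.mem_setOf_eq, Set.mem_Ici, ENNReal.ofReal_lt_top, and_true]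

lemma measurableSet_ISet :
    MeasurableSet {s : ℝ | 0 ≤ s ∧ ENNReal.ofReal s < α} := by
  have : {s : ℝ | 0 ≤ s ∧ ENNReal.ofReal s < α}
      = Ici (0:ℝ) ∩ ENNReal.ofReal ⁻¹' (Iio α) := by
    ext s; simp [Set.mem_setOf_eq]
  rw [this]
  exact measurableSet_Ici.inter (ENNReal.measurable_ofReal measurableSet_Iio)

lemma muI_apply (A : Set ℝ) :
    muI α A = volume (A ∩ {s : ℝ | 0 ≤ s ∧ ENNReal.ofReal s < α}) :=
  Measure.restrict_apply' measurableSet_ISet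

lemma muI_countable_null {C : Set ℝ} (h : C.Countable) : muI α C = 0 := by
  rw [muI_apply]
  exact measure_mono_null Set.inter_subset_left (h.measure_zero _)

lemma ae_muI_pos : ∀ᵐ t ∂(muI α), 0 < t := by
  rw [ae_iff]
  rw [muI_apply]
  apply measure_mono_null (t := {(0:ℝ)})
  · intro s hs
    simp only [Set.mem_inter_iff, Set.mem_setOf_eq, not_lt] at hs
    simp [le_antisymm hs.1 hs.2.1]
  · exact measure_singleton 0

lemma muI_univ (hα : α = 1 ∨ α = ∞) : muI α univ = α := by
  rw [muI_apply, Set.univ_inter]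
  rcases hα with h | h
  · rw [ISet_one h, h, Real.volume_Ico]; norm_num
  · rw [ISet_top h, h, Real.volume_Ici]

lemma muI_Ioo (hα : α = 1 ∨ α = ∞) {r : ℝ} (hr : ENNReal.ofReal r ≤ α) :
    muI α (Ioo 0 r) = ENNReal.ofReal r := by
  rw [muI_apply]
  rcases hα with h | h
  · rw [ISet_one h]
    have hr1 : r ≤ 1 := by
      rw [h] at hr; exact ENNReal.ofReal_le_one.mp hr
    have : Ioo (0:ℝ) r ∩ Ico 0 1 = Ioo 0 r := by
      apply Set.inter_eq_self_of_subset_left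
      intro s hs
      exact ⟨hs.1.le, lt_of_lt_of_le hs.2 hr1⟩
    rw [this, Real.volume_Ioo, sub_zero]
  · rw [ISet_top h]
    have : Ioo (0:ℝ) r ∩ Ici 0 = Ioo 0 r := by
      apply Set.inter_eq_self_of_subset_left
      intro s hs; exact hs.1.le
    rw [this, Real.volume_Ioo, sub_zero]

lemma muI_pred_lt (hα : α = 1 ∨ α = ∞) {d : ℝ≥0∞} (hd : d ≤ α) :
    muI α {t : ℝ | 0 < t ∧ ENNReal.ofReal t < d} = d := by
  by_cases htop : d = ∞
  · subst htop
    have hat : α = ∞ := top_le_iff.mp hd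
    have : {t : ℝ | 0 < t ∧ ENNReal.ofReal t < ∞} = Ioi (0:ℝ) := by
      ext t; simp [ENNReal.ofReal_lt_top]
    rw [this, muI_apply, ISet_top hat]
    have h2 : Ioi (0:ℝ) ∩ Ici 0 = Ioi 0 :=
      Set.inter_eq_self_of_subset_left fun s hs => Set.mem_Ici.mpr (le_of_lt hs)
    rw [h2]
    exact Real.volume_Ioi
  · have : {t : ℝ | 0 < t ∧ ENNReal.ofReal t < d} = Ioo 0 d.toReal := by
      ext t
      simp only [Set.mem_setOf_eq, Set.mem_Ioo]
      constructor
      · rintro ⟨ht, hlt⟩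
        exact ⟨ht, (ENNReal.ofReal_lt_iff_lt_toReal ht.le htop).mp hlt⟩
      · rintro ⟨ht, hlt⟩
        exact ⟨ht, (ENNReal.ofReal_lt_iff_lt_toReal ht.le htop).mpr hlt⟩
    rw [this, muI_Ioo hα (by rw [ENNReal.ofReal_toReal htop]; exact hd),
      ENNReal.ofReal_toReal htop]

lemma muI_Ici_top (h : α = ∞) (c : ℝ) : muI α (Ici c) = ∞ := by
  rw [muI_apply, ISet_top h]
  have : Ici (max c 0) ⊆ Ici c ∩ Ici 0 := by
    intro s hs
    exact ⟨Set.mem_Ici.mpr (le_trans (le_max_left _ _) hs), Set.mem_Ici.mpr (le_trans (le_max_right _ _) hs)⟩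
  refine top_unique ?_
  calc (⊤:ℝ≥0∞) = volume (Ici (max c 0)) := (Real.volume_Ici).symm
  _ ≤ _ := measure_mono this

/-! ### distribution function -/

lemma distr_univ_of_neg {x : ℝ → ℝ} {lam : ℝ} (h : lam < 0) :
    distr α x lam = muI α univ := by
  unfold distr
  congr 1
  ext s
  simp only [Set.mem_setOf_eq, Set.mem_univ, iff_true]
  exact lt_of_lt_of_le h (abs_nonneg _)

lemma distr_anti (x : ℝ → ℝ) : Antitone (distr α x) := by
  intro a b hab
  exact measure_mono fun s hs => lt_of_le_of_lt hab hs

lemma distr_mono_ae {x y : ℝ → ℝ} (h : ∀ᵐ s ∂(muI α), |x s| ≤ |y s|) (lam : ℝ) :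
    distr α x lam ≤ distr α y lam := by
  apply measure_mono_ae
  filter_upwards [h] with s hs
  exact fun h2 => lt_of_lt_of_le h2 hs

lemma distr_congr_ae {x y : ℝ → ℝ} (h : x =ᵐ[muI α] y) : distr α x = distr α y := by
  funext lam
  apply measure_congr
  filter_upwards [h] with s hs
  exact congrArg (fun r => (lam < |r| : Prop)) hs

lemma distr_abs (x : ℝ → ℝ) : distr α (fun s => |x s|) = distr α x := by
  funext lam; unfold distr; congr 1; ext s; simp [abs_abs]

lemma distr_smul {c : ℝ} (hc : 0 < c) (x : ℝ → ℝ) (lam : ℝ) :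
    distr α (c • x) lam = distr α x (lam / c) := by
  unfold distr
  congr 1
  ext s
  simp only [Set.mem_setOf_eq, Pi.smul_apply, smul_eq_mul, abs_mul,
    abs_of_pos hc, div_lt_iff₀' hc]

lemma distr_le_of_forall_lt {x : ℝ → ℝ} {lam : ℝ} {c : ℝ≥0∞}
    (h : ∀ m : ℕ, distr α x (lam + 1/(m+1)) ≤ c) : distr α x lam ≤ c := by
  have hset : {s : ℝ | lam < |x s|} = ⋃ m : ℕ, {s : ℝ | lam + 1/(m+1:ℝ) < |x s|} := by
    ext s
    simp only [Set.mem_setOf_eq, Set.mem_iUnion]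
    constructor
    · intro hs
      obtain ⟨m, hm⟩ := exists_nat_one_div_lt (sub_pos.mpr hs)
      exact ⟨m, by linarith⟩
    · rintro ⟨m, hm⟩
      have : (0:ℝ) < 1/(m+1:ℝ) := by positivity
      linarith
  unfold distr
  rw [hset]
  have hdir : Directed (· ⊆ ·) (fun m : ℕ => {s : ℝ | lam + 1/(m+1:ℝ) < |x s|}) := by
    apply Monotone.directed_le
    intro a b hab s hs
    simp only [Set.mem_setOf_eq] at hs ⊢
    have h1 : (1:ℝ)/(b+1:ℝ) ≤ 1/(a+1:ℝ) := by
      apply one_div_le_one_div_of_le (by positivity)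
      exact_mod_cast by omega
    linarith
  rw [hdir.measure_iUnion]
  exact iSup_le h

lemma distr_le_alpha (hα : α = 1 ∨ α = ∞) (x : ℝ → ℝ) (lam : ℝ) :
    distr α x lam ≤ α :=
  le_of_le_of_eq (measure_mono (Set.subset_univ _)) (muI_univ hα)

end OCProof
namespace OCProof

open scoped Pointwise

variable {α : ℝ≥0∞}

/-! ### the set defining the rearrangement -/

def Sset (α : ℝ≥0∞) (x : ℝ → ℝ) (t : ℝ) : Set ℝ :=
  {lam : ℝ | 0 < lam ∧ distr α x lam ≤ ENNReal.ofReal t}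

lemma rearr_eq_sInf (x : ℝ → ℝ) (t : ℝ) : rearr α x t = sInf (Sset α x t) := rfl

lemma Sset_bddBelow (x : ℝ → ℝ) (t : ℝ) : BddBelow (Sset α x t) :=
  ⟨0, fun _ h => h.1.le⟩

lemma Sset_mono {x : ℝ → ℝ} {t₁ t₂ : ℝ} (h : t₁ ≤ t₂) : Sset α x t₁ ⊆ Sset α x t₂ :=
  fun _ hl => ⟨hl.1, hl.2.trans (ENNReal.ofReal_le_ofReal h)⟩

/-- "no junk" : the rearrangement infimum is over a nonempty set for every `t > 0`. -/
def NJ (α : ℝ≥0∞) (x : ℝ → ℝ) : Prop :=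
  ∀ t : ℝ, 0 < t → (Sset α x t).Nonempty

lemma rearr_nonneg (x : ℝ → ℝ) (t : ℝ) : 0 ≤ rearr α x t :=
  Real.sInf_nonneg fun _ h => h.1.le

lemma rearr_le_of_distr_le {x : ℝ → ℝ} {lam t : ℝ} (hlam : 0 ≤ lam)
    (h : distr α x lam ≤ ENNReal.ofReal t) : rearr α x t ≤ lam := by
  rcases eq_or_lt_of_le hlam with h0 | h0
  · have hsub : Ioi (0:ℝ) ⊆ Sset α x t := by
      intro mu hmu
      refine ⟨hmu, le_trans ?_ h⟩
      exact distr_anti x (le_of_lt (h0 ▸ hmu))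
    have hsub2 : Sset α x t ⊆ Ioi (0:ℝ) := fun mu hmu => hmu.1
    rw [rearr_eq_sInf, Set.Subset.antisymm hsub2 hsub, csInf_Ioi, ← h0]
  · exact csInf_le (Sset_bddBelow x t) ⟨h0, h⟩

lemma distr_le_of_rearr_le {x : ℝ → ℝ} {lam t : ℝ} (hne : (Sset α x t).Nonempty)
    (h : rearr α x t ≤ lam) : distr α x lam ≤ ENNReal.ofReal t := by
  apply distr_le_of_forall_lt
  intro m
  have hlt : sInf (Sset α x t) < lam + 1/(m+1:ℝ) := by
    rw [← rearr_eq_sInf]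
    have : (0:ℝ) < 1/(m+1:ℝ) := by positivity
    linarith
  obtain ⟨mu, hmu, hmult⟩ := exists_lt_of_csInf_lt hne hlt
  exact le_trans (distr_anti x hmult.le) hmu.2

lemma rearr_le_iff {x : ℝ → ℝ} {lam t : ℝ} (hne : (Sset α x t).Nonempty)
    (hlam : 0 ≤ lam) : rearr α x t ≤ lam ↔ distr α x lam ≤ ENNReal.ofReal t :=
  ⟨distr_le_of_rearr_le hne, rearr_le_of_distr_le hlam⟩

lemma lt_rearr_iff {x : ℝ → ℝ} {lam t : ℝ} (hne : (Sset α x t).Nonempty)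
    (hlam : 0 ≤ lam) : lam < rearr α x t ↔ ENNReal.ofReal t < distr α x lam := by
  rw [← not_le, ← not_le]
  exact not_congr (rearr_le_iff hne hlam)

lemma rearr_anti {x : ℝ → ℝ} (hnj : NJ α x) {t₁ t₂ : ℝ} (h1 : 0 < t₁)
    (h12 : t₁ ≤ t₂) : rearr α x t₂ ≤ rearr α x t₁ :=
  csInf_le_csInf (Sset_bddBelow x t₂) (hnj t₁ h1) (Sset_mono h12)

lemma rearr_mono_distr {f g : ℝ → ℝ}
    (h : ∀ lam, 0 < lam → distr α f lam ≤ distr α g lam) (hnj : NJ α g)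
    {t : ℝ} (ht : 0 < t) : rearr α f t ≤ rearr α g t := by
  apply csInf_le_csInf (Sset_bddBelow f t) (hnj t ht)
  intro lam hl
  exact ⟨hl.1, le_trans (h lam hl.1) hl.2⟩

lemma rearr_congr {f g : ℝ → ℝ} (h : distr α f = distr α g) :
    rearr α f = rearr α g := by
  funext t
  unfold rearr
  rw [h]

lemma rearr_smul {c : ℝ} (hc : 0 < c) (x : ℝ → ℝ) (t : ℝ) :
    rearr α (c • x) t = c * rearr α x t := by
  have himg : Sset α (c • x) t = (fun mu => c * mu) '' Sset α x t := by
    ext lam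
    simp only [Sset, Set.mem_setOf_eq, Set.mem_image]
    constructor
    · rintro ⟨hpos, hle⟩
      refine ⟨lam / c, ⟨by positivity, ?_⟩, by field_simp⟩
      rw [← distr_smul hc]
      exact hle
    · rintro ⟨mu, ⟨hpos, hle⟩, heq⟩
      subst heq
      constructor
      · positivity
      · rw [distr_smul hc, mul_div_cancel_left₀ _ hc.ne']
        exact hle
  have himg2 : (fun mu => c * mu) '' Sset α x t = c • Sset α x t := by
    ext y; simp [Set.mem_smul_set]
  rw [rearr_eq_sInf, himg, himg2, Real.sInf_smul_of_nonneg hc.le, smul_eq_mul,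
    rearr_eq_sInf]

end OCProof
namespace OCProof

variable {α : ℝ≥0∞}

lemma rearr_of_nonpos {x : ℝ → ℝ} {t : ℝ} (ht : t ≤ 0) :
    rearr α x t = rearr α x 0 := by
  unfold rearr
  rw [ENNReal.ofReal_of_nonpos ht, ENNReal.ofReal_zero]

lemma rearr_measurable {x : ℝ → ℝ} (hnj : NJ α x) : Measurable (rearr α x) := by
  have key : ∀ m : ℕ, Measurable
      ((Iic (0:ℝ)).piecewise (fun _ => rearr α x 0)
        (fun t => rearr α x (max t (1/(m+1:ℝ))))) := by
    intro m
    apply Measurable.piecewise measurableSet_Iic measurable_const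
    have hanti : Antitone (fun t : ℝ => rearr α x (max t (1/(m+1:ℝ)))) := by
      intro a b hab
      exact rearr_anti hnj (lt_max_of_lt_right (by positivity))
        (max_le_max hab le_rfl)
    exact hanti.measurable
  apply measurable_of_tendsto_metrizable key
  rw [tendsto_pi_nhds]
  intro t
  rcases le_or_gt t 0 with ht | ht
  · apply tendsto_const_nhds.congr'
    filter_upwards with m
    rw [Set.piecewise_eq_of_mem _ _ _ (Set.mem_Iic.mpr ht)]
    exact rearr_of_nonpos ht
  · apply tendsto_const_nhds.congr'
    obtain ⟨m₀, hm₀⟩ := exists_nat_one_div_lt ht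
    filter_upwards [eventually_ge_atTop m₀] with m hm
    have h1 : (1:ℝ)/(m+1:ℝ) ≤ 1/(m₀+1:ℝ) := by
      apply one_div_le_one_div_of_le (by positivity)
      exact_mod_cast by omega
    have h2 : max t (1/(m+1:ℝ)) = t := max_eq_left (by linarith)
    rw [Set.piecewise_eq_of_notMem _ _ _ (by simpa using ht.not_ge), h2]

/-- upper sandwich bound: for `0 < t' < t`, `(rearr x) t ≤ x t'` when `x`
is nonnegative and antitone on positive reals. -/
lemma rearr_le_antitone {x : ℝ → ℝ} (hx0 : ∀ s, 0 ≤ x s)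
    (hanti : ∀ a b, 0 < a → a ≤ b → x b ≤ x a)
    {t t' : ℝ} (h0 : 0 < t') (hlt : t' < t) : rearr α x t ≤ x t' := by
  apply le_of_forall_pos_le_add
  intro del hdel
  apply rearr_le_of_distr_le (by have := hx0 t'; linarith)
  have hsub : {s : ℝ | x t' + del < |x s|} ∩ {s : ℝ | 0 ≤ s ∧ ENNReal.ofReal s < α}
      ⊆ Ico 0 t' := by
    rintro s ⟨hs1, hs2, _⟩
    simp only [Set.mem_setOf_eq] at hs1
    rw [abs_of_nonneg (hx0 s)] at hs1
    refine ⟨hs2, ?_⟩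
    by_contra hge
    push_neg at hge
    have := hanti t' s h0 hge
    linarith
  calc distr α x (x t' + del) ≤ volume (Ico 0 t') := by
        rw [distr, muI_apply]; exact measure_mono hsub
  _ = ENNReal.ofReal t' := by rw [Real.volume_Ico, sub_zero]
  _ ≤ ENNReal.ofReal t := ENNReal.ofReal_le_ofReal hlt.le

/-- lower sandwich bound. -/
lemma antitone_le_rearr {x : ℝ → ℝ} (hnj : NJ α x) (hx0 : ∀ s, 0 ≤ x s)
    (hanti : ∀ a b, 0 < a → a ≤ b → x b ≤ x a)
    {t t'' : ℝ} (ht : 0 < t) (hlt : t < t'')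
    (hI : ENNReal.ofReal t'' ≤ muI α (Ioo 0 t'')) : x t'' ≤ rearr α x t := by
  apply le_csInf (hnj t ht)
  intro lam hlam
  by_contra hcon
  push_neg at hcon
  have hsub : Ioo (0:ℝ) t'' ⊆ {s : ℝ | lam < |x s|} := by
    intro s hs
    simp only [Set.mem_setOf_eq]
    rw [abs_of_nonneg (hx0 s)]
    exact lt_of_lt_of_le hcon (hanti s t'' hs.1 hs.2.le)
  have h1 : ENNReal.ofReal t'' ≤ distr α x lam := by
    calc ENNReal.ofReal t'' ≤ muI α (Ioo 0 t'') := hI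
    _ ≤ distr α x lam := measure_mono hsub
  have h2 : ENNReal.ofReal t < ENNReal.ofReal t'' :=
    (ENNReal.ofReal_lt_ofReal_iff (lt_trans ht hlt)).mpr hlt
  exact absurd hlam.2 (not_le.mpr (lt_of_lt_of_le h2 h1))

lemma rearr_countable_ne {x : ℝ → ℝ} (hnj : NJ α x) (hx0 : ∀ s, 0 ≤ x s)
    (hanti : ∀ a b, 0 < a → a ≤ b → x b ≤ x a) {B : ℝ}
    (hB : ∀ t'', 0 < t'' → t'' < B → ENNReal.ofReal t'' ≤ muI α (Ioo 0 t'')) :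
    {t : ℝ | 0 < t ∧ t < B ∧ rearr α x t ≠ x t}.Countable := by
  have hDm : ∀ m : ℕ, {t : ℝ | ¬ ContinuousAt
      (fun t : ℝ => -(x (max t (1/(m+1:ℝ))))) t}.Countable := by
    intro m
    have hmono : Monotone (fun t : ℝ => -(x (max t (1/(m+1:ℝ))))) := by
      intro a b hab
      simp only [neg_le_neg_iff]
      exact hanti _ _ (lt_max_of_lt_right (by positivity)) (max_le_max hab le_rfl)
    exact hmono.countable_not_continuousAt
  apply Set.Countable.mono ?_ (Set.countable_iUnion hDm)
  intro t ht
  obtain ⟨ht0, htB, hne⟩ := ht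
  obtain ⟨m, hm⟩ := exists_nat_one_div_lt ht0
  simp only [Set.mem_iUnion, Set.mem_setOf_eq]
  refine ⟨m, fun hcont => hne ?_⟩
  have hcont2 : ContinuousAt (fun t : ℝ => x (max t (1/(m+1:ℝ)))) t := by
    have := hcont.neg
    simp only [Pi.neg_def, neg_neg] at this
    exact this
  have hfx : x (max t (1/(m+1:ℝ))) = x t := by rw [max_eq_left hm.le]
  -- upper bound : rearr x t ≤ x t
  have hup : rearr α x t ≤ x t := by
    have htd : Tendsto (fun t' : ℝ => x (max t' (1/(m+1:ℝ)))) (nhdsWithin t (Iio t))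
        (nhds (x t)) := by
      rw [← hfx]
      exact (hcont2.continuousWithinAt).tendsto
    apply ge_of_tendsto htd
    filter_upwards [Ioo_mem_nhdsLT_of_mem (Set.mem_Ioc.mpr ⟨hm, le_rfl⟩)] with t' ht'
    rw [max_eq_left (le_of_lt ht'.1)]
    exact rearr_le_antitone hx0 hanti (lt_trans (by positivity) ht'.1) ht'.2
  -- lower bound : x t ≤ rearr x t
  have hlo : x t ≤ rearr α x t := by
    have htd : Tendsto (fun t'' : ℝ => x (max t'' (1/(m+1:ℝ)))) (nhdsWithin t (Ioi t))
        (nhds (x t)) := by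
      rw [← hfx]
      exact (hcont2.continuousWithinAt).tendsto
    apply le_of_tendsto htd
    filter_upwards [Ioo_mem_nhdsGT_of_mem (Set.mem_Ico.mpr ⟨le_rfl, htB⟩)] with t'' ht''
    rw [max_eq_left (le_of_lt (lt_trans hm ht''.1))]
    exact antitone_le_rearr hnj hx0 hanti ht0 ht''.1 (hB t'' (lt_trans ht0 ht''.1) ht''.2)
  linarith

lemma rearr_ae_eq (hα : α = 1 ∨ α = ∞) {x : ℝ → ℝ} (hnj : NJ α x)
    (hx0 : ∀ s, 0 ≤ x s) (hanti : ∀ a b, 0 < a → a ≤ b → x b ≤ x a) :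
    rearr α x =ᵐ[muI α] x := by
  have key : ∀ B : ℝ, (∀ t'', 0 < t'' → t'' < B →
      ENNReal.ofReal t'' ≤ muI α (Ioo 0 t'')) →
      {t : ℝ | 0 < t ∧ t < B ∧ rearr α x t ≠ x t}.Countable :=
    fun B hB => rearr_countable_ne hnj hx0 hanti hB
  rcases hα with h1 | h1
  · have hC := key 1 (fun t'' h0 hB => le_of_eq
      (muI_Ioo (Or.inl h1) (by rw [h1]; exact ENNReal.ofReal_le_one.mpr hB.le)).symm)
    rw [Filter.EventuallyEq, ae_iff, muI_apply]
    apply measure_mono_null (t := {(0:ℝ)} ∪ {t : ℝ | 0 < t ∧ t < 1 ∧ rearr α x t ≠ x t})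
    · rintro s ⟨hs1, hs2, hs3⟩
      simp only [Set.mem_setOf_eq] at hs1
      rcases eq_or_lt_of_le hs2 with h | h
      · exact Or.inl (by simp [← h])
      · right
        refine ⟨h, ?_, hs1⟩
        rw [h1] at hs3
        exact (ENNReal.ofReal_lt_one).mp hs3
    · exact measure_mono_null (Set.union_subset_union_right _ (fun a ha => ha))
        (measure_union_null (measure_singleton 0) (hC.measure_zero _))
  · have hC : ∀ R : ℕ, {t : ℝ | 0 < t ∧ t < (R:ℝ) ∧ rearr α x t ≠ x t}.Countable :=
      fun R => key R (fun t'' h0 _ => le_of_eq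
        (muI_Ioo (Or.inr h1) (by rw [h1]; exact le_top)).symm)
    rw [Filter.EventuallyEq, ae_iff, muI_apply]
    apply measure_mono_null
      (t := {(0:ℝ)} ∪ ⋃ R : ℕ, {t : ℝ | 0 < t ∧ t < (R:ℝ) ∧ rearr α x t ≠ x t})
    · rintro s ⟨hs1, hs2, _⟩
      simp only [Set.mem_setOf_eq] at hs1
      rcases eq_or_lt_of_le hs2 with h | h
      · exact Or.inl (by simp [← h])
      · right
        obtain ⟨R, hR⟩ := exists_nat_gt s
        exact Set.mem_iUnion.mpr ⟨R, h, hR, hs1⟩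
    · apply measure_union_null (measure_singleton 0)
      exact measure_iUnion_null fun R => (hC R).measure_zero _

end OCProof
namespace OCProof

variable {α : ℝ≥0∞} {E : SymmetricBFS α}

lemma neg_smul_one (f : ℝ → ℝ) : (-1 : ℝ) • f = -f := by
  funext s; simp

lemma mem_neg {f : ℝ → ℝ} (hf : E.Mem f) : E.Mem (-f) := by
  rw [← neg_smul_one]
  exact E.smul_mem (-1) hf

lemma mem_sub {f g : ℝ → ℝ} (hf : E.Mem f) (hg : E.Mem g) : E.Mem (f - g) := by
  rw [sub_eq_add_neg]
  exact E.add_mem hf (mem_neg hg)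

lemma N_neg (f : ℝ → ℝ) : E.N (-f) = E.N f := by
  rw [← neg_smul_one, E.norm_smul' (-1) f]
  simp

lemma N_sub_le (f g h : ℝ → ℝ) : E.N (f - h) ≤ E.N (f - g) + E.N (g - h) := by
  have h3 := E.norm_add_le (f - g) (g - h)
  have h2 : (f - g) + (g - h) = f - h := sub_add_sub_cancel f g h
  rwa [h2] at h3

lemma N_sub_rev (f g : ℝ → ℝ) : E.N (f - g) = E.N (g - f) := by
  rw [← N_neg (f - g), neg_sub]

/-- every member of `E` is non-junk. -/
lemma nj_of_mem {x : ℝ → ℝ} (hx : E.Mem x) : NJ α x := by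
  by_cases hfin : ∃ lam : ℝ, 0 < lam ∧ distr α x lam < ∞
  · obtain ⟨l₀, hl₀, hfin⟩ := hfin
    intro t ht
    have hxm : AEMeasurable x (muI α) := E.mem_aemeasurable hx
    have hsets : ∀ m : ℕ, NullMeasurableSet {s : ℝ | l₀ + m < |x s|} (muI α) := by
      intro m
      have h2 : {s : ℝ | l₀ + m < |x s|} = (fun s => ‖x s‖) ⁻¹' (Ioi (l₀ + m)) := by
        ext s; simp [Real.norm_eq_abs]
      rw [h2]
      exact (hxm.norm.nullMeasurable) measurableSet_Ioi
    have hanti : Antitone (fun m : ℕ => {s : ℝ | l₀ + (m:ℝ) < |x s|}) := by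
      intro a b hab s hs
      simp only [Set.mem_setOf_eq] at hs ⊢
      have : (a:ℝ) ≤ b := by exact_mod_cast hab
      linarith
    have hinter : (⋂ m : ℕ, {s : ℝ | l₀ + (m:ℝ) < |x s|}) = ∅ := by
      ext s
      simp only [Set.mem_iInter, Set.mem_setOf_eq, Set.mem_empty_iff_false, iff_false,
        not_forall, not_lt]
      obtain ⟨m, hm⟩ := exists_nat_gt (|x s| - l₀)
      exact ⟨m, by linarith⟩
    have htend : Tendsto (fun m : ℕ => distr α x (l₀ + m)) atTop (nhds 0) := by
      have := MeasureTheory.tendsto_measure_iInter_atTop (μ := muI α) hsets hanti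
        ⟨0, by simpa [distr] using (lt_of_le_of_lt (distr_anti x (by linarith : l₀ ≤ l₀ + (0:ℕ))) hfin).ne⟩
      rw [hinter] at this
      simpa [distr, Function.comp_def] using this
    have hev := htend.eventually_lt_const (ENNReal.ofReal_pos.mpr ht)
    obtain ⟨m, hm⟩ := hev.exists
    exact ⟨l₀ + m, ⟨by positivity, hm.le⟩⟩
  · exfalso
    push_neg at hfin
    have htop : ∀ lam : ℝ, 0 < lam → distr α x lam = ∞ :=
      fun lam h => top_le_iff.mp (hfin lam h)
    have hd2 : distr α ((2:ℝ) • x) = distr α x := by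
      funext lam
      rcases lt_or_ge 0 lam with h | h
      · rw [distr_smul (by norm_num : (0:ℝ) < 2), htop lam h, htop (lam/2) (by linarith)]
      · unfold distr
        congr 1
        ext s
        simp only [Set.mem_setOf_eq, Pi.smul_apply, smul_eq_mul, abs_mul]
        rw [abs_two]
        constructor
        · intro hs
          rcases h.lt_or_eq with hneg | h0
          · exact lt_of_lt_of_le hneg (abs_nonneg _)
          · subst h0; nlinarith [abs_nonneg (x s)]
        · intro hs
          rcases h.lt_or_eq with hneg | h0
          · nlinarith [abs_nonneg (x s)]
          · subst h0; nlinarith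
    have hsym := E.symmetric ((E.mem_aemeasurable hx).const_smul (2:ℝ)) hx hd2
    have hnorm := E.norm_smul' 2 x
    rw [hsym.2, abs_two] at hnorm
    have hN0 : E.N x = 0 := by linarith
    have hae := (E.norm_eq_zero_iff hx).mp hN0
    have : distr α x 1 = 0 := by
      apply measure_mono_null (t := {s : ℝ | x s ≠ 0})
      · intro s hs
        simp only [Set.mem_setOf_eq] at hs ⊢
        intro h0
        rw [h0] at hs
        simp at hs
        linarith
      · rw [← ae_iff]
        exact hae
    rw [htop 1 one_pos] at this
    exact ENNReal.top_ne_zero this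

lemma distr_rearr (hα : α = 1 ∨ α = ∞) {x : ℝ → ℝ} (hnj : NJ α x) :
    distr α (rearr α x) = distr α x := by
  funext lam
  rcases lt_or_ge lam 0 with h | h
  · rw [distr_univ_of_neg h, distr_univ_of_neg h]
  · have hAB : {t : ℝ | lam < |rearr α x t|} ∩ Ioi (0:ℝ)
        = {t : ℝ | 0 < t ∧ ENNReal.ofReal t < distr α x lam} := by
      ext t
      simp only [Set.mem_inter_iff, Set.mem_setOf_eq, Set.mem_Ioi]
      constructor
      · rintro ⟨h1, h2⟩
        rw [abs_of_nonneg (rearr_nonneg x t)] at h1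
        exact ⟨h2, (lt_rearr_iff (hnj t h2) h).mp h1⟩
      · rintro ⟨h1, h2⟩
        refine ⟨?_, h1⟩
        rw [abs_of_nonneg (rearr_nonneg x t)]
        exact (lt_rearr_iff (hnj t h1) h).mpr h2
    have hnull : muI α ({t : ℝ | lam < |rearr α x t|} \ Ioi (0:ℝ)) = 0 := by
      apply measure_mono_null (t := Iic (0:ℝ))
      · intro t htm
        exact not_lt.mp (by simpa using htm.2)
      · rw [muI_apply]
        apply measure_mono_null (t := {(0:ℝ)})
        · rintro t ⟨ht1, ht2, _⟩
          simp only [Set.mem_Iic] at ht1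
          simp [le_antisymm ht1 ht2]
        · exact measure_singleton 0
    have h1 : distr α (rearr α x) lam
        = muI α ({t : ℝ | lam < |rearr α x t|} ∩ Ioi (0:ℝ)) := by
      unfold distr
      apply le_antisymm
      · calc muI α {t : ℝ | lam < |rearr α x t|}
            ≤ muI α ({t : ℝ | lam < |rearr α x t|} ∩ Ioi (0:ℝ))
              + muI α ({t : ℝ | lam < |rearr α x t|} \ Ioi (0:ℝ)) :=
              measure_le_inter_add_diff _ _ _
        _ = muI α ({t : ℝ | lam < |rearr α x t|} ∩ Ioi (0:ℝ)) := by
              rw [hnull, add_zero]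
      · exact measure_mono Set.inter_subset_left
    rw [h1, hAB, muI_pred_lt hα (distr_le_alpha hα x lam)]

end OCProof
namespace OCProof

variable {α : ℝ≥0∞} {E : SymmetricBFS α}

lemma mem_rearr (hα : α = 1 ∨ α = ∞) {x : ℝ → ℝ} (hx : E.Mem x) :
    E.Mem (rearr α x) ∧ E.N (rearr α x) = E.N x :=
  E.symmetric (rearr_measurable (nj_of_mem hx)).aemeasurable hx
    (distr_rearr hα (nj_of_mem hx))

lemma norm_congr_ae {f g : ℝ → ℝ} (hf : AEMeasurable f (muI α)) (hg : E.Mem g)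
    (h : f =ᵐ[muI α] g) : E.Mem f ∧ E.N f = E.N g := by
  have h1 := E.ideal hf hg (by filter_upwards [h] with s hs; rw [hs])
  have h2 := E.ideal (E.mem_aemeasurable hg) h1.1
    (by filter_upwards [h] with s hs; rw [hs])
  exact ⟨h1.1, le_antisymm h1.2 h2.2⟩

lemma rearr_rearr (hα : α = 1 ∨ α = ∞) {x : ℝ → ℝ} (hx : E.Mem x) :
    rearr α (rearr α x) = rearr α x :=
  rearr_congr (distr_rearr hα (nj_of_mem hx))

/-- the key sufficient condition for the HLP relation: `w* ≤ x*` pointwise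
on positives, together with a positive multiple lower bound. -/
lemma hlp_of {x w : ℝ → ℝ} (hx : E.Mem x) (hw : E.Mem w)
    (hle : ∀ t, 0 < t → rearr α w t ≤ rearr α x t)
    {th : ℝ} (hth : 0 < th)
    (hlow : ∀ t, 0 < t → th * rearr α x t ≤ rearr α w t) :
    HLP α w x := by
  intro t ht
  have hmw : Measurable (rearr α w) := rearr_measurable (nj_of_mem hw)
  have hmx : Measurable (rearr α x) := rearr_measurable (nj_of_mem hx)
  by_cases hint : IntegrableOn (rearr α x) (Ioc 0 t) volume
  · have hintw : IntegrableOn (rearr α w) (Ioc 0 t) volume := by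
      apply MeasureTheory.Integrable.mono hint (hmw.aestronglyMeasurable.restrict)
      rw [MeasureTheory.ae_restrict_iff' measurableSet_Ioc]
      apply Filter.Eventually.of_forall
      intro s hs
      rw [Real.norm_eq_abs, Real.norm_eq_abs, abs_of_nonneg (rearr_nonneg w s),
        abs_of_nonneg (rearr_nonneg x s)]
      exact hle s hs.1
    have hmono : (∫ s in Ioc (0:ℝ) t, rearr α w s) ≤ ∫ s in Ioc (0:ℝ) t, rearr α x s :=
      setIntegral_mono_on hintw hint measurableSet_Ioc (fun s hs => hle s hs.1)
    unfold maxf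
    gcongr
  · have hnw : ¬ IntegrableOn (rearr α w) (Ioc 0 t) volume := by
      intro hcon
      apply hint
      have h2 : IntegrableOn (fun s => th⁻¹ * rearr α w s) (Ioc 0 t) volume :=
        hcon.const_mul _
      apply MeasureTheory.Integrable.mono h2 (hmx.aestronglyMeasurable.restrict)
      rw [MeasureTheory.ae_restrict_iff' measurableSet_Ioc]
      apply Filter.Eventually.of_forall
      intro s hs
      rw [Real.norm_eq_abs, Real.norm_eq_abs, abs_of_nonneg (rearr_nonneg x s),
        abs_of_nonneg (mul_nonneg (inv_nonneg.mpr hth.le) (rearr_nonneg w s))]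
      calc rearr α x s = th⁻¹ * (th * rearr α x s) := by field_simp
      _ ≤ th⁻¹ * rearr α w s :=
          mul_le_mul_of_nonneg_left (hlow s hs.1) (by positivity)
    unfold maxf
    rw [MeasureTheory.integral_undef hnw, MeasureTheory.integral_undef hint]

end OCProof
namespace OCProof

variable {α : ℝ≥0∞} {E : SymmetricBFS α}

lemma llukm_step (hα : α = 1 ∨ α = ∞) {x : ℝ → ℝ} (hx : E.Mem x)
    (hLL : E.IsLLUKMPoint x) (M : ℕ → ℝ → ℝ)
    (hM0 : ∀ k t, 0 ≤ M k t)
    (hMle : ∀ k t, M k t ≤ rearr α x t)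
    (hManti : ∀ k, ∀ a b : ℝ, 0 < a → a ≤ b → M k b ≤ M k a)
    (hMmono : ∀ k t, M k t ≤ M (k+1) t)
    (hMtend : ∀ t, 0 < t → Tendsto (fun k => M k t) atTop (𝓝 (rearr α x t)))
    (hMmeas : ∀ k, Measurable (M k)) :
    Tendsto (fun k => E.N (fun t => rearr α x t - M k t)) atTop (𝓝 0) := by
  have hxr := mem_rearr (E := E) hα hx
  have hnjx := nj_of_mem (E := E) hx
  set th : ℕ → ℝ := fun k => ((k:ℝ)+2)⁻¹ with hth_def
  have hth_pos : ∀ k, 0 < th k := fun k => by positivity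
  have hth_half : ∀ k, th k ≤ 1/2 := by
    intro k
    rw [hth_def]
    simp only
    rw [show (1:ℝ)/2 = (2:ℝ)⁻¹ by norm_num]
    apply inv_anti₀ (by norm_num)
    have : (0:ℝ) ≤ (k:ℝ) := Nat.cast_nonneg k
    linarith
  have hth_tend : Tendsto th atTop (𝓝 0) :=
    tendsto_inv_atTop_zero.comp
      (tendsto_atTop_add_const_right atTop 2 tendsto_natCast_atTop_atTop)
  set W : ℕ → ℝ → ℝ := fun k t => (1 - th k) * M k t + th k * rearr α x t with hW_def
  have habs : ∀ (f : ℝ → ℝ), (∀ t, 0 ≤ f t) → (∀ t, f t ≤ rearr α x t) →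
      ∀ᵐ t ∂(muI α), |f t| ≤ |rearr α x t| := by
    intro f h0 hle
    apply Filter.Eventually.of_forall
    intro t
    rw [abs_of_nonneg (h0 t), abs_of_nonneg (rearr_nonneg x t)]
    exact hle t
  have hMmem : ∀ k, E.Mem (M k) ∧ E.N (M k) ≤ E.N (rearr α x) :=
    fun k => E.ideal (hMmeas k).aemeasurable hxr.1 (habs _ (hM0 k) (hMle k))
  have hW0 : ∀ k t, 0 ≤ W k t := by
    intro k t
    have h1 := hth_pos k
    have h2 := hth_half k
    have := hM0 k t
    have := rearr_nonneg (α := α) x t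
    rw [hW_def]
    simp only
    nlinarith
  have hWle : ∀ k t, W k t ≤ rearr α x t := by
    intro k t
    have h1 := hth_pos k
    have h2 := hth_half k
    have h3 := hMle k t
    rw [hW_def]
    simp only
    nlinarith
  have hWlow : ∀ k t, th k * rearr α x t ≤ W k t := by
    intro k t
    have h1 := hth_pos k
    have h2 := hth_half k
    have h3 := hM0 k t
    rw [hW_def]
    simp only
    nlinarith
  have hWmeas : ∀ k, Measurable (W k) := by
    intro k
    exact (measurable_const.mul (hMmeas k)).add
      (measurable_const.mul (rearr_measurable hnjx))
  have hWmem : ∀ k, E.Mem (W k) ∧ E.N (W k) ≤ E.N (rearr α x) :=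
    fun k => E.ideal (hWmeas k).aemeasurable hxr.1 (habs _ (hW0 k) (hWle k))
  have hWanti : ∀ k, ∀ a b : ℝ, 0 < a → a ≤ b → W k b ≤ W k a := by
    intro k a b ha hab
    have h1 := hth_pos k
    have h2 := hth_half k
    have h3 := hManti k a b ha hab
    have h4 : rearr α x b ≤ rearr α x a := rearr_anti hnjx ha hab
    rw [hW_def]
    simp only
    nlinarith
  -- Fatou on M
  have hFat := E.fatou M (rearr α x) (fun k => (hMmem k).1)
    (rearr_measurable hnjx).aemeasurable
    (fun k => Filter.Eventually.of_forall (hM0 k))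
    (fun k => Filter.Eventually.of_forall (hMmono k))
    (by filter_upwards [ae_muI_pos (α := α)] with t ht using hMtend t ht)
    ⟨E.N (rearr α x), fun k => (hMmem k).2⟩
  -- HLP for each W k
  have hHLP : ∀ k, HLP α (W k) x := by
    intro k
    apply hlp_of hx (hWmem k).1 ?_ (hth_pos k) ?_
    · intro t ht
      apply rearr_mono_distr ?_ hnjx ht
      intro lam hlam
      calc distr α (W k) lam ≤ distr α (rearr α x) lam :=
            distr_mono_ae (habs _ (hW0 k) (hWle k)) lam
      _ = distr α x lam := by rw [distr_rearr hα hnjx]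
    · intro t ht
      have hsm : rearr α (th k • rearr α x) t = th k * rearr α x t := by
        rw [rearr_smul (hth_pos k), rearr_rearr hα hx]
      rw [← hsm]
      apply rearr_mono_distr ?_ (nj_of_mem (hWmem k).1) ht
      intro lam hlam
      apply distr_mono_ae
      apply Filter.Eventually.of_forall
      intro s
      rw [Pi.smul_apply, smul_eq_mul,
        abs_of_nonneg (mul_nonneg (hth_pos k).le (rearr_nonneg x s)),
        abs_of_nonneg (hW0 k s)]
      exact hWlow k s
  -- norm convergence of W k
  set g : ℕ → ℝ → ℝ := fun k t => rearr α x t - M k t with hg_def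
  have hgbound : ∀ k, E.N (g k) ≤ 2 * E.N (rearr α x) := by
    intro k
    have h1 : g k = rearr α x + (-(M k)) := by
      funext t; simp [hg_def, sub_eq_add_neg]
    rw [h1]
    calc E.N (rearr α x + (-(M k))) ≤ E.N (rearr α x) + E.N (-(M k)) :=
          E.norm_add_le _ _
    _ = E.N (rearr α x) + E.N (M k) := by rw [N_neg]
    _ ≤ 2 * E.N (rearr α x) := by
          have := (hMmem k).2
          linarith
  have hWM : ∀ k, W k - M k = th k • g k := by
    intro k
    funext t
    simp only [Pi.sub_apply, Pi.smul_apply, smul_eq_mul, hW_def, hg_def]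
    ring
  have hNWM : ∀ k, E.N (W k - M k) ≤ th k * (2 * E.N (rearr α x)) := by
    intro k
    rw [hWM k, E.norm_smul' (th k) (g k), abs_of_pos (hth_pos k)]
    exact mul_le_mul_of_nonneg_left (hgbound k) (hth_pos k).le
  have hup : ∀ k, E.N (W k) ≤ E.N (M k) + th k * (2 * E.N (rearr α x)) := by
    intro k
    have h1 : W k = M k + (W k - M k) := by funext t; simp
    calc E.N (W k) = E.N (M k + (W k - M k)) := by rw [← h1]
    _ ≤ E.N (M k) + E.N (W k - M k) := E.norm_add_le _ _
    _ ≤ _ := by have := hNWM k; linarith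
  have hdn : ∀ k, E.N (M k) - th k * (2 * E.N (rearr α x)) ≤ E.N (W k) := by
    intro k
    have h1 : M k = W k + (M k - W k) := by funext t; simp
    have h2 : E.N (M k - W k) = E.N (W k - M k) := N_sub_rev _ _
    have h3 : E.N (M k) ≤ E.N (W k) + th k * (2 * E.N (rearr α x)) := by
      calc E.N (M k) = E.N (W k + (M k - W k)) := by rw [← h1]
      _ ≤ E.N (W k) + E.N (M k - W k) := E.norm_add_le _ _
      _ ≤ _ := by rw [h2]; have := hNWM k; linarith
    linarith
  have hNW_tend : Tendsto (fun k => E.N (W k)) atTop (𝓝 (E.N x)) := by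
    have hC : Tendsto (fun k => th k * (2 * E.N (rearr α x))) atTop (𝓝 0) := by
      simpa using hth_tend.mul_const (2 * E.N (rearr α x))
    have hlo : Tendsto (fun k => E.N (M k) - th k * (2 * E.N (rearr α x)))
        atTop (𝓝 (E.N (rearr α x))) := by
      simpa using hFat.2.sub hC
    have hhi : Tendsto (fun k => E.N (M k) + th k * (2 * E.N (rearr α x)))
        atTop (𝓝 (E.N (rearr α x))) := by
      simpa using hFat.2.add hC
    have := tendsto_of_tendsto_of_tendsto_of_le_of_le hlo hhi hdn hup
    rwa [hxr.2] at this
  have hconc := hLL W (fun k => (hWmem k).1) hHLP hNW_tend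
  have hkey : ∀ k, E.N (g k) ≤ 2 * E.N (rearr α (W k) - rearr α x) := by
    intro k
    have e1 : rearr α (W k) =ᵐ[muI α] W k :=
      rearr_ae_eq hα (nj_of_mem (hWmem k).1) (hW0 k) (hWanti k)
    have e2 : (fun t => W k t - rearr α x t) =ᵐ[muI α]
        (rearr α (W k) - rearr α x) := by
      filter_upwards [e1] with t htt
      simp only [Pi.sub_apply, htt]
    have hmemd : E.Mem (rearr α (W k) - rearr α x) :=
      mem_sub (mem_rearr hα (hWmem k).1).1 hxr.1
    have h3 := norm_congr_ae (E := E)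
      (((hWmeas k).sub (rearr_measurable hnjx)).aemeasurable) hmemd e2
    have h4 : (fun t => W k t - rearr α x t) = (th k - 1) • g k := by
      funext t
      simp only [Pi.smul_apply, smul_eq_mul, hW_def, hg_def]
      ring
    have h5 : E.N ((th k - 1) • g k) = (1 - th k) * E.N (g k) := by
      rw [E.norm_smul']
      congr 1
      rw [abs_of_neg (by have := hth_half k; linarith : th k - 1 < 0)]
      ring
    have h6 : (1 - th k) * E.N (g k) = E.N (rearr α (W k) - rearr α x) := by
      rw [← h5, ← h4]
      exact h3.2
    have hNg := E.norm_nonneg' (g k)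
    have hNd := E.norm_nonneg' (rearr α (W k) - rearr α x)
    nlinarith [hth_pos k, hth_half k]
  have hfin : Tendsto (fun k => E.N (g k)) atTop (𝓝 0) := by
    apply squeeze_zero (fun k => E.norm_nonneg' _) hkey
    simpa using hconc.const_mul 2
  exact hfin

end OCProof
namespace OCProof

variable {α : ℝ≥0∞} {E : SymmetricBFS α}

private lemma one_div_succ_pos (k : ℕ) : (0:ℝ) < 1/((k:ℝ)+1) := by positivity

private lemma one_div_succ_anti {a b : ℕ} (h : a ≤ b) :
    (1:ℝ)/((b:ℝ)+1) ≤ 1/((a:ℝ)+1) := by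
  apply one_div_le_one_div_of_le (by positivity)
  exact_mod_cast by omega

private lemma one_div_succ_tendsto :
    Tendsto (fun k : ℕ => (1:ℝ)/((k:ℝ)+1)) atTop (𝓝 0) :=
  tendsto_one_div_add_atTop_nhds_zero_nat

/-- Application (I) : peaks of `x*` tend to zero in norm. -/
lemma peak_step (hα : α = 1 ∨ α = ∞) {x : ℝ → ℝ} (hx : E.Mem x)
    (hLL : E.IsLLUKMPoint x) :
    Tendsto (fun k : ℕ => E.N (fun t =>
      rearr α x t - min (rearr α x t) (rearr α x (1/((k:ℝ)+1))))) atTop (𝓝 0) := by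
  have hnjx := nj_of_mem (E := E) hx
  apply llukm_step hα hx hLL
    (fun k t => min (rearr α x t) (rearr α x (1/((k:ℝ)+1))))
  · intro k t
    exact le_min (rearr_nonneg x t) (rearr_nonneg x _)
  · intro k t
    exact min_le_left _ _
  · intro k a b ha hab
    exact min_le_min (rearr_anti hnjx ha hab) le_rfl
  · intro k t
    apply min_le_min le_rfl
    apply rearr_anti hnjx (one_div_succ_pos (k+1))
    exact one_div_succ_anti (by omega)
  · intro t ht
    apply tendsto_const_nhds.congr'
    obtain ⟨k₀, hk₀⟩ := exists_nat_one_div_lt ht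
    filter_upwards [eventually_ge_atTop k₀] with k hk
    have h1 : (1:ℝ)/((k:ℝ)+1) ≤ 1/((k₀:ℝ)+1) := one_div_succ_anti hk
    have h2 : rearr α x t ≤ rearr α x (1/((k:ℝ)+1)) :=
      rearr_anti hnjx (one_div_succ_pos k) (by linarith)
    rw [min_eq_left h2]
  · intro k
    exact (rearr_measurable hnjx).min measurable_const

/-- Application (II) : truncations of `x*` at small heights tend to zero in norm. -/
lemma trunc_step (hα : α = 1 ∨ α = ∞) {x : ℝ → ℝ} (hx : E.Mem x)
    (hLL : E.IsLLUKMPoint x) :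
    Tendsto (fun k : ℕ => E.N (fun t =>
      min (rearr α x t) (1/((k:ℝ)+1)))) atTop (𝓝 0) := by
  have hnjx := nj_of_mem (E := E) hx
  have hre : ∀ k : ℕ, (fun t => rearr α x t - max (rearr α x t - 1/((k:ℝ)+1)) 0)
      = fun t => min (rearr α x t) (1/((k:ℝ)+1)) := by
    intro k
    funext t
    rcases le_total (rearr α x t) (1/((k:ℝ)+1)) with h | h
    · rw [max_eq_right (by linarith), min_eq_left h, sub_zero]
    · rw [max_eq_left (by linarith), min_eq_right h]
      ring
  have := llukm_step hα hx hLL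
    (fun k t => max (rearr α x t - 1/((k:ℝ)+1)) 0)
    ?_ ?_ ?_ ?_ ?_ ?_
  · apply this.congr
    intro k
    rw [hre k]
  · intro k t
    exact le_max_right _ _
  · intro k t
    apply max_le ?_ (rearr_nonneg x t)
    have := one_div_succ_pos k
    linarith
  · intro k a b ha hab
    apply max_le_max ?_ le_rfl
    have := rearr_anti hnjx ha hab
    linarith
  · intro k t
    apply max_le_max ?_ le_rfl
    have h3 : (1:ℝ)/(((k+1:ℕ):ℝ)+1) ≤ 1/((k:ℝ)+1) :=
      one_div_succ_anti (by omega)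
    push_cast at h3 ⊢
    linarith
  · intro t ht
    rw [tendsto_iff_dist_tendsto_zero]
    apply squeeze_zero (fun k => dist_nonneg) ?_ one_div_succ_tendsto
    intro k
    rw [Real.dist_eq, abs_le]
    have h1 := one_div_succ_pos k
    constructor
    · rcases le_total (rearr α x t) (1/((k:ℝ)+1)) with h | h
      · rw [max_eq_right (by linarith)]
        have := rearr_nonneg (α := α) x t
        linarith
      · rw [max_eq_left (by linarith)]
        linarith
    · rcases le_total (rearr α x t) (1/((k:ℝ)+1)) with h | h
      · rw [max_eq_right (by linarith)]
        have := rearr_nonneg (α := α) x t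
        linarith
      · rw [max_eq_left (by linarith)]
        linarith
  · intro k
    exact ((rearr_measurable hnjx).sub measurable_const).max measurable_const

/-- Application (III) : tails of `x*` tend to zero in norm. -/
lemma tail_step (hα : α = 1 ∨ α = ∞) {x : ℝ → ℝ} (hx : E.Mem x)
    (hLL : E.IsLLUKMPoint x) :
    Tendsto (fun k : ℕ => E.N (fun t =>
      rearr α x t - (Ioo (0:ℝ) ((k:ℝ)+1)).indicator (rearr α x) t)) atTop (𝓝 0) := by
  have hnjx := nj_of_mem (E := E) hx
  apply llukm_step hα hx hLL
    (fun k t => (Ioo (0:ℝ) ((k:ℝ)+1)).indicator (rearr α x) t)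
  · intro k t
    exact Set.indicator_nonneg (fun s _ => rearr_nonneg x s) t
  · intro k t
    exact Set.indicator_le_self' (fun s _ => rearr_nonneg x s) t
  · intro k a b ha hab
    by_cases hb : b ∈ Ioo (0:ℝ) ((k:ℝ)+1)
    · have ha' : a ∈ Ioo (0:ℝ) ((k:ℝ)+1) := ⟨ha, lt_of_le_of_lt hab hb.2⟩
      rw [Set.indicator_of_mem hb, Set.indicator_of_mem ha']
      exact rearr_anti hnjx ha hab
    · rw [Set.indicator_of_notMem hb]
      exact Set.indicator_nonneg (fun s _ => rearr_nonneg x s) a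
  · intro k t
    apply Set.indicator_le_indicator_of_subset
    · apply Ioo_subset_Ioo_right
      push_cast
      linarith
    · exact fun s => rearr_nonneg x s
  · intro t ht
    apply tendsto_const_nhds.congr'
    obtain ⟨k₀, hk₀⟩ := exists_nat_gt t
    filter_upwards [eventually_ge_atTop k₀] with k hk
    have : t ∈ Ioo (0:ℝ) ((k:ℝ)+1) := by
      refine ⟨ht, ?_⟩
      have : (k₀:ℝ) ≤ (k:ℝ) := by exact_mod_cast hk
      linarith
    rw [Set.indicator_of_mem this]
  · intro k
    exact (rearr_measurable hnjx).indicator measurableSet_Ioo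

end OCProof
namespace OCProof

variable {α : ℝ≥0∞} {E : SymmetricBFS α}

lemma ind_Ici_set (c lam : ℝ) :
    {t : ℝ | lam < |Set.indicator (Ici c) (fun _ => (1:ℝ)) t|}
    = if lam < 0 then univ else (if lam < 1 then Ici c else ∅) := by
  ext t
  by_cases htc : t ∈ Ici c
  · rw [Set.mem_setOf_eq, Set.indicator_of_mem htc]
    rcases lt_or_ge lam 0 with h0 | h0
    · simp only [h0, if_true]
      simp only [Set.mem_univ, iff_true]
      rw [abs_of_nonneg (by norm_num : (0:ℝ) ≤ (1:ℝ))]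
      linarith
    · rcases lt_or_ge lam 1 with h1 | h1
      · simp [not_lt.mpr h0, h1, htc, abs_of_nonneg (by norm_num : (0:ℝ) ≤ (1:ℝ))]
      · simp [not_lt.mpr h0, not_lt.mpr h1,
          abs_of_nonneg (by norm_num : (0:ℝ) ≤ (1:ℝ)), not_lt.mpr h1]
  · rw [Set.mem_setOf_eq, Set.indicator_of_notMem htc]
    rcases lt_or_ge lam 0 with h0 | h0
    · simp [h0]
    · rcases lt_or_ge lam 1 with h1 | h1
      · simp [not_lt.mpr h0, h1, htc, not_lt.mpr h0]
      · simp [not_lt.mpr h0, not_lt.mpr h1]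

lemma distr_ind_Ici (hatop : α = ∞) {c c' : ℝ} (hc : 0 ≤ c) (hc' : 0 ≤ c') :
    distr α (Set.indicator (Ici c) (fun _ => (1:ℝ)))
    = distr α (Set.indicator (Ici c') (fun _ => (1:ℝ))) := by
  funext lam
  unfold distr
  rw [ind_Ici_set, ind_Ici_set]
  rcases lt_or_ge lam 0 with h0 | h0
  · simp [h0]
  · rcases lt_or_ge lam 1 with h1 | h1
    · simp only [not_lt.mpr h0, if_false, h1, if_true]
      rw [muI_Ici_top hatop, muI_Ici_top hatop]
    · simp [not_lt.mpr h0, not_lt.mpr h1]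

lemma tail_contra (hatop : α = ∞) {x : ℝ → ℝ} (hx : E.Mem x) (hLL : E.IsLLUKMPoint x)
    {η : ℝ} (hη : 0 < η) (hd : distr α x η = ∞) : False := by
  have hα : α = 1 ∨ α = ∞ := Or.inr hatop
  have hnjx := nj_of_mem (E := E) hx
  have hxr := mem_rearr (E := E) hα hx
  have hlow : ∀ t : ℝ, 0 < t → η ≤ rearr α x t := by
    intro t ht
    apply le_csInf (hnjx t ht)
    intro lam hlam
    by_contra hcon
    push_neg at hcon
    have h1 : distr α x lam = ∞ :=
      top_le_iff.mp (hd ▸ distr_anti x hcon.le)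
    have h2 := hlam.2
    rw [h1] at h2
    exact ENNReal.ofReal_ne_top (top_le_iff.mp h2)
  -- the indicator functions
  set indK : ℕ → ℝ → ℝ :=
    fun k => Set.indicator (Ici ((k:ℝ)+1)) (fun _ => (1:ℝ)) with hind_def
  have hindmeas : ∀ k, Measurable (indK k) :=
    fun k => measurable_const.indicator measurableSet_Ici
  set dif : ℕ → ℝ → ℝ :=
    fun k t => rearr α x t - (Ioo (0:ℝ) ((k:ℝ)+1)).indicator (rearr α x) t
    with hdif_def
  have hdif0 : ∀ k t, 0 ≤ dif k t := by
    intro k t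
    rw [hdif_def]
    simp only [sub_nonneg]
    exact Set.indicator_le_self' (fun s _ => rearr_nonneg x s) t
  have hdifle : ∀ k t, dif k t ≤ rearr α x t := by
    intro k t
    rw [hdif_def]
    simp only [sub_le_self_iff]
    exact Set.indicator_nonneg (fun s _ => rearr_nonneg x s) t
  have hmemdif : ∀ k, E.Mem (dif k) := by
    intro k
    apply (E.ideal ?_ hxr.1 ?_).1
    · exact ((rearr_measurable hnjx).sub
        ((rearr_measurable hnjx).indicator measurableSet_Ioo)).aemeasurable
    · apply Filter.Eventually.of_forall
      intro t
      rw [abs_of_nonneg (hdif0 k t), abs_of_nonneg (rearr_nonneg x t)]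
      exact hdifle k t
  have hdom : ∀ k, ∀ t : ℝ, |(η • indK k) t| ≤ |dif k t| := by
    intro k t
    rw [Pi.smul_apply, smul_eq_mul, abs_of_nonneg (hdif0 k t)]
    by_cases htk : t ∈ Ici ((k:ℝ)+1)
    · rw [hind_def]
      simp only [Set.indicator_of_mem htk]
      rw [abs_of_nonneg (by linarith : (0:ℝ) ≤ η * 1), mul_one]
      have ht0 : (0:ℝ) < t := lt_of_lt_of_le (by positivity) htk
      have hnot : t ∉ Ioo (0:ℝ) ((k:ℝ)+1) := by
        intro hmem
        exact absurd hmem.2 (not_lt.mpr htk)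
      rw [hdif_def]
      simp only [Set.indicator_of_notMem hnot, sub_zero]
      exact hlow t ht0
    · rw [hind_def]
      simp only [Set.indicator_of_notMem htk]
      simp [hdif0 k t]
  have hidealK : ∀ k, E.Mem (η • indK k) ∧ E.N (η • indK k) ≤ E.N (dif k) :=
    fun k => E.ideal ((hindmeas k).aemeasurable.const_smul η) (hmemdif k)
      (Filter.Eventually.of_forall (hdom k))
  have hmem0 : E.Mem (indK 0) := by
    have := (hidealK 0).1
    have h2 := E.smul_mem η⁻¹ this
    have h3 : η⁻¹ • (η • indK 0) = indK 0 := by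
      funext t
      simp only [Pi.smul_apply, smul_eq_mul]
      rw [← mul_assoc, inv_mul_cancel₀ hη.ne', one_mul]
    rwa [h3] at h2
  have hsymK : ∀ k, E.Mem (indK k) ∧ E.N (indK k) = E.N (indK 0) := by
    intro k
    apply E.symmetric (hindmeas k).aemeasurable hmem0
    rw [hind_def]
    exact distr_ind_Ici hatop (by positivity) (by positivity)
  have hbound : ∀ k, η * E.N (indK 0) ≤ E.N (dif k) := by
    intro k
    calc η * E.N (indK 0) = η * E.N (indK k) := by rw [(hsymK k).2]
    _ = E.N (η • indK k) := by rw [E.norm_smul', abs_of_pos hη]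
    _ ≤ E.N (dif k) := (hidealK k).2
  have htail := tail_step (E := E) hα hx hLL
  have hle0 : η * E.N (indK 0) ≤ 0 :=
    ge_of_tendsto htail (Filter.Eventually.of_forall hbound)
  have hN0 : E.N (indK 0) = 0 := by
    have h1 := E.norm_nonneg' (indK 0)
    nlinarith
  have hae := (E.norm_eq_zero_iff hmem0).mp hN0
  have h2 : {t : ℝ | ¬ indK 0 t = 0} = Ici (((0:ℕ):ℝ)+1) := by
    ext t
    rw [hind_def]
    by_cases h : t ∈ Ici (((0:ℕ):ℝ)+1)
    · simp [Set.indicator_of_mem h, h]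
    · simp [Set.indicator_of_notMem h, h]
  have h3 := ae_iff.mp hae
  rw [h2, muI_Ici_top hatop] at h3
  exact ENNReal.top_ne_zero h3

end OCProof
namespace OCProof

variable {α : ℝ≥0∞} {E : SymmetricBFS α}

lemma rearr_eq_zero_of_distr_le {y : ℝ → ℝ} {t : ℝ}
    (h : ∀ lam : ℝ, 0 < lam → distr α y lam ≤ ENNReal.ofReal t) :
    rearr α y t = 0 := by
  have hsub : Ioi (0:ℝ) ⊆ Sset α y t := fun mu hmu => ⟨hmu, h mu hmu⟩
  have hsub2 : Sset α y t ⊆ Ioi (0:ℝ) := fun mu hmu => hmu.1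
  rw [rearr_eq_sInf, Set.Subset.antisymm hsub2 hsub, csInf_Ioi]

lemma distr_min_const {f : ℝ → ℝ} (hf0 : ∀ s, 0 ≤ f s) {η : ℝ} (hη : 0 < η) :
    ∀ lam : ℝ, 0 ≤ lam →
      distr α (fun s => min (f s) η) lam = (if lam < η then distr α f lam else 0) := by
  intro lam hlam
  by_cases h : lam < η
  · rw [if_pos h]
    unfold distr
    congr 1
    ext s
    simp only [Set.mem_setOf_eq]
    rw [abs_of_nonneg (le_min (hf0 s) hη.le), abs_of_nonneg (hf0 s), lt_min_iff]
    exact ⟨fun hh => hh.1, fun hh => ⟨hh, h⟩⟩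
  · rw [if_neg h]
    push_neg at h
    have : {s : ℝ | lam < |min (f s) η|} = ∅ := by
      ext s
      simp only [Set.mem_setOf_eq, Set.mem_empty_iff_false, iff_false, not_lt]
      rw [abs_of_nonneg (le_min (hf0 s) hη.le)]
      exact le_trans (min_le_right _ _) h
    unfold distr
    rw [this]
    exact measure_empty

lemma distr_min_congr {f g : ℝ → ℝ} (hf0 : ∀ s, 0 ≤ f s) (hg0 : ∀ s, 0 ≤ g s)
    (hfg : distr α f = distr α g) {η : ℝ} (hη : 0 < η) :
    distr α (fun s => min (f s) η) = distr α (fun s => min (g s) η) := by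
  funext lam
  rcases lt_or_ge lam 0 with h | h
  · rw [distr_univ_of_neg h, distr_univ_of_neg h]
  · rw [distr_min_const hf0 hη lam h, distr_min_const hg0 hη lam h, hfg]

end OCProof

/-- If `x ∈ E` is an `LLUKM` point and `x*(t)·φ(t) → 0` as `t → 0⁺`, then
`x` is a point of order continuity. -/
theorem llukm_point_is_oc_point (α : ℝ≥0∞) (hα : α = 1 ∨ α = ∞)
    (E : SymmetricBFS α) (x : ℝ → ℝ) (hx : E.Mem x)
    (hLLUKM : E.IsLLUKMPoint x)
    (hphi : Tendsto (fun t => rearr α x t * E.fund t) (𝓝[>] (0 : ℝ)) (𝓝 0)) :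
    E.IsOCPoint x := by
  classical
  intro u hu hbd hcv
  have hnjx := OCProof.nj_of_mem (E := E) hx
  have hxr := OCProof.mem_rearr (E := E) hα hx
  -- all distribution values of x are finite
  have hc : ∀ η : ℝ, 0 < η → distr α x η < ∞ := by
    intro η hη
    rcases hα with h1 | h1
    · calc distr α x η ≤ muI α univ := measure_mono (Set.subset_univ _)
      _ = 1 := by rw [OCProof.muI_univ (Or.inl h1), h1]
      _ < ∞ := ENNReal.one_lt_top
    · by_contra hcon
      exact OCProof.tail_contra h1 hx hLLUKM hη (not_lt.mp hcon |> top_le_iff.mp)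
  -- measurable representatives
  have hxm : AEMeasurable x (muI α) := E.mem_aemeasurable hx
  set X : ℝ → ℝ := fun s => |hxm.mk x s| with hX_def
  have hXmeas : Measurable X := hxm.measurable_mk.abs
  have hXae : (fun s => |x s|) =ᵐ[muI α] X := by
    filter_upwards [hxm.ae_eq_mk] with s hs
    rw [hX_def]
    simp only
    rw [hs]
  have hX0 : ∀ s, 0 ≤ X s := fun s => abs_nonneg _
  have hXd : distr α X = distr α x := by
    rw [← OCProof.distr_abs (α := α) x]
    exact OCProof.distr_congr_ae hXae.symm
  set g : ℕ → ℝ → ℝ := fun n => (E.mem_aemeasurable (hu n)).mk (u n) with hg_def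
  have hgmeas : ∀ n, Measurable (g n) := fun n => (E.mem_aemeasurable (hu n)).measurable_mk
  set h : ℕ → ℝ → ℝ := fun n s => min (max (g n s) 0) (X s) with hh_def
  have hhmeas : ∀ n, Measurable (h n) :=
    fun n => ((hgmeas n).max measurable_const).min hXmeas
  set v : ℕ → ℝ → ℝ := fun n s => (⨆ k : ℕ, ENNReal.ofReal (h (n+k) s)).toReal
    with hv_def
  have hsup_le : ∀ n s, (⨆ k : ℕ, ENNReal.ofReal (h (n+k) s)) ≤ ENNReal.ofReal (X s) := by
    intro n s
    apply iSup_le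
    intro k
    exact ENNReal.ofReal_le_ofReal (min_le_right _ _)
  have hsup_ne_top : ∀ n s, (⨆ k : ℕ, ENNReal.ofReal (h (n+k) s)) ≠ ∞ :=
    fun n s => ne_top_of_le_ne_top ENNReal.ofReal_ne_top (hsup_le n s)
  have hvle : ∀ n s, v n s ≤ X s := by
    intro n s
    calc v n s ≤ (ENNReal.ofReal (X s)).toReal :=
          ENNReal.toReal_mono ENNReal.ofReal_ne_top (hsup_le n s)
    _ = X s := ENNReal.toReal_ofReal (hX0 s)
  have hv0 : ∀ n s, 0 ≤ v n s := fun n s => ENNReal.toReal_nonneg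
  have hvmeas : ∀ n, Measurable (v n) := by
    intro n
    apply ENNReal.measurable_toReal.comp
    exact Measurable.iSup (fun k => ENNReal.measurable_ofReal.comp (hhmeas (n+k)))
  have hvanti : ∀ s, Antitone (fun n => v n s) := by
    intro s
    apply antitone_nat_of_succ_le
    intro n
    apply ENNReal.toReal_mono (hsup_ne_top n s)
    apply iSup_le
    intro k
    have hnk : n+1+k = n+(k+1) := by omega
    rw [hnk]
    exact le_iSup (fun k => ENNReal.ofReal (h (n+k) s)) (k+1)
  -- the good a.e. set
  have hgood : ∀ᵐ s ∂(muI α), (∀ n, u n s = g n s) ∧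
      (∀ n, 0 ≤ u n s ∧ u n s ≤ |x s|) ∧
      Tendsto (fun n => u n s) atTop (𝓝 0) ∧ |x s| = X s := by
    have h1 : ∀ᵐ s ∂(muI α), ∀ n, u n s = g n s :=
      MeasureTheory.ae_all_iff.mpr (fun n => (E.mem_aemeasurable (hu n)).ae_eq_mk)
    have h2 : ∀ᵐ s ∂(muI α), ∀ n, 0 ≤ u n s ∧ u n s ≤ |x s| :=
      MeasureTheory.ae_all_iff.mpr hbd
    filter_upwards [h1, h2, hcv, hXae] with s hs1 hs2 hs3 hs4
    exact ⟨hs1, hs2, hs3, hs4⟩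
  have hkey : ∀ᵐ s ∂(muI α), (∀ j, h j s = u j s) := by
    filter_upwards [hgood] with s hs
    intro j
    rw [hh_def]
    simp only
    rw [← hs.1 j, ← hs.2.2.2]
    rw [max_eq_left (hs.2.1 j).1, min_eq_left (hs.2.1 j).2]
  have huv : ∀ n, ∀ᵐ s ∂(muI α), |u n s| ≤ |v n s| := by
    intro n
    filter_upwards [hgood, hkey] with s hs hk
    rw [abs_of_nonneg (hs.2.1 n).1, abs_of_nonneg (hv0 n s)]
    have h1 : ENNReal.ofReal (u n s) ≤ ⨆ k : ℕ, ENNReal.ofReal (h (n+k) s) := by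
      have := le_iSup (fun k : ℕ => ENNReal.ofReal (h (n+k) s)) 0
      rwa [Nat.add_zero, hk n] at this
    calc u n s = (ENNReal.ofReal (u n s)).toReal :=
          (ENNReal.toReal_ofReal (hs.2.1 n).1).symm
    _ ≤ v n s := ENNReal.toReal_mono (hsup_ne_top n s) h1
  have hvtend : ∀ᵐ s ∂(muI α), Tendsto (fun n => v n s) atTop (𝓝 0) := by
    filter_upwards [hgood, hkey] with s hs hk
    rw [tendsto_iff_dist_tendsto_zero]
    rw [Metric.tendsto_atTop]
    intro ε hε
    have h3 := Metric.tendsto_atTop.mp hs.2.2.1 (ε/2) (by linarith)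
    obtain ⟨N, hN⟩ := h3
    refine ⟨N, fun n hn => ?_⟩
    have hvb : v n s ≤ ε/2 := by
      have hsup2 : (⨆ k : ℕ, ENNReal.ofReal (h (n+k) s)) ≤ ENNReal.ofReal (ε/2) := by
        apply iSup_le
        intro k
        rw [hk (n+k)]
        apply ENNReal.ofReal_le_ofReal
        have := hN (n+k) (by omega)
        rw [Real.dist_eq, sub_zero] at this
        exact (abs_le.mp this.le).2
      calc v n s ≤ (ENNReal.ofReal (ε/2)).toReal :=
            ENNReal.toReal_mono ENNReal.ofReal_ne_top hsup2
      _ = ε/2 := ENNReal.toReal_ofReal (by linarith)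
    rw [Real.dist_eq, sub_zero, Real.dist_eq, sub_zero,
      abs_of_nonneg (abs_nonneg _), abs_of_nonneg (hv0 n s)]
    linarith
  have hvmem : ∀ n, E.Mem (v n) := by
    intro n
    apply (E.ideal (hvmeas n).aemeasurable hx ?_).1
    filter_upwards [hXae] with s hs
    rw [abs_of_nonneg (hv0 n s), hs]
    exact hvle n s
  have hNu_le : ∀ n, E.N (u n) ≤ E.N (v n) :=
    fun n => (E.ideal (E.mem_aemeasurable (hu n)) (hvmem n) (huv n)).2
  apply squeeze_zero (fun n => E.norm_nonneg' _) hNu_le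
  -- main part : the norms of `v n` tend to zero
  rw [Metric.tendsto_atTop]
  intro ε hε
  have hε4 : (0:ℝ) < ε/4 := by linarith
  obtain ⟨k₁, hk₁⟩ :=
    ((OCProof.trunc_step (E := E) hα hx hLLUKM).eventually_lt_const hε4).exists
  set η : ℝ := 1/((k₁:ℝ)+1) with hη_def
  have hη : 0 < η := by rw [hη_def]; positivity
  obtain ⟨k₂, hk₂⟩ :=
    ((OCProof.peak_step (E := E) hα hx hLLUKM).eventually_lt_const hε4).exists
  rw [Metric.tendsto_nhdsWithin_nhds] at hphi
  obtain ⟨δ, hδ, hδ2⟩ := hphi (ε/4) hε4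
  set a : ℝ := min (1/((k₂:ℝ)+1)) (δ/2) with ha_def
  have ha0 : 0 < a := lt_min (by positivity) (by linarith)
  have ha1 : a ≤ 1/((k₂:ℝ)+1) := min_le_left _ _
  have ha2 : a < δ := lt_of_le_of_lt (min_le_right _ _) (by linarith)
  -- the peak of x* at scale a
  set P : ℝ → ℝ := fun t => rearr α x t - min (rearr α x t) (rearr α x a) with hP_def
  have hP0 : ∀ t, 0 ≤ P t := by
    intro t
    rw [hP_def]
    simp only
    have := min_le_left (rearr α x t) (rearr α x a)
    linarith
  have hPle : ∀ t, P t ≤ rearr α x t := by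
    intro t
    rw [hP_def]
    simp only
    have h2 : 0 ≤ min (rearr α x t) (rearr α x a) :=
      le_min (OCProof.rearr_nonneg x t) (OCProof.rearr_nonneg x a)
    linarith
  have hPmeas : Measurable P :=
    (OCProof.rearr_measurable hnjx).sub
      ((OCProof.rearr_measurable hnjx).min measurable_const)
  have hPmem : E.Mem P := by
    apply (E.ideal hPmeas.aemeasurable hxr.1 ?_).1
    apply Filter.Eventually.of_forall
    intro t
    rw [abs_of_nonneg (hP0 t), abs_of_nonneg (OCProof.rearr_nonneg x t)]
    exact hPle t
  have hNP : E.N P < ε/4 := by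
    set Pk : ℝ → ℝ :=
      fun t => rearr α x t - min (rearr α x t) (rearr α x (1/((k₂:ℝ)+1))) with hPk_def
    have hPk0 : ∀ t, 0 ≤ Pk t := by
      intro t
      rw [hPk_def]
      simp only
      have := min_le_left (rearr α x t) (rearr α x (1/((k₂:ℝ)+1)))
      linarith
    have hPkle : ∀ t, Pk t ≤ rearr α x t := by
      intro t
      rw [hPk_def]
      simp only
      have h2 : 0 ≤ min (rearr α x t) (rearr α x (1/((k₂:ℝ)+1))) :=
        le_min (OCProof.rearr_nonneg x t) (OCProof.rearr_nonneg x _)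
      linarith
    have hPkmeas : Measurable Pk :=
      (OCProof.rearr_measurable hnjx).sub
        ((OCProof.rearr_measurable hnjx).min measurable_const)
    have hPkmem : E.Mem Pk := by
      apply (E.ideal hPkmeas.aemeasurable hxr.1 ?_).1
      apply Filter.Eventually.of_forall
      intro t
      rw [abs_of_nonneg (hPk0 t), abs_of_nonneg (OCProof.rearr_nonneg x t)]
      exact hPkle t
    have hPPk : ∀ t, P t ≤ Pk t := by
      intro t
      rw [hP_def, hPk_def]
      simp only
      have h3 : rearr α x (1/((k₂:ℝ)+1)) ≤ rearr α x a :=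
        OCProof.rearr_anti hnjx ha0 ha1
      have := min_le_min (le_refl (rearr α x t)) h3
      linarith
    have h4 : E.N P ≤ E.N Pk := by
      apply (E.ideal hPmeas.aemeasurable hPkmem ?_).2
      apply Filter.Eventually.of_forall
      intro t
      rw [abs_of_nonneg (hP0 t), abs_of_nonneg (hPk0 t)]
      exact hPPk t
    exact lt_of_le_of_lt h4 hk₂
  -- sets where v n is large
  set A : ℕ → Set ℝ := fun n => {s : ℝ | η < v n s} with hA_def
  have hAmeas : ∀ n, MeasurableSet (A n) := by
    intro n
    have : A n = v n ⁻¹' (Ioi η) := rfl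
    rw [this]
    exact (hvmeas n) measurableSet_Ioi
  have hA_anti : Antitone A := by
    intro m n hmn s hs
    simp only [hA_def, Set.mem_setOf_eq] at hs ⊢
    exact lt_of_lt_of_le hs (hvanti s hmn)
  have hAfin : muI α (A 0) ≠ ∞ := by
    apply ne_top_of_le_ne_top (hc η hη).ne
    rw [← hXd]
    apply measure_mono
    intro s hs
    simp only [hA_def, Set.mem_setOf_eq] at hs
    show η < |X s|
    rw [abs_of_nonneg (hX0 s)]
    exact lt_of_lt_of_le hs (hvle 0 s)
  have hInull : muI α (⋂ n, A n) = 0 := by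
    have hbad := ae_iff.mp hvtend
    apply measure_mono_null ?_ hbad
    intro s hs
    simp only [Set.mem_iInter, hA_def, Set.mem_setOf_eq] at hs
    simp only [Set.mem_setOf_eq]
    intro hT
    obtain ⟨N, hN⟩ := Metric.tendsto_atTop.mp hT η hη
    have := hN N le_rfl
    rw [Real.dist_eq, sub_zero, abs_of_nonneg (hv0 N s)] at this
    exact absurd (hs N) (not_lt.mpr this.le)
  have htendA : Tendsto (fun n => muI α (A n)) atTop (𝓝 0) := by
    have := MeasureTheory.tendsto_measure_iInter_atTop (μ := muI α)
      (fun n => (hAmeas n).nullMeasurableSet) hA_anti ⟨0, hAfin⟩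
    rw [hInull] at this
    exact this
  obtain ⟨n₀, hn₀⟩ := Filter.eventually_atTop.mp
    (htendA.eventually_lt_const (ENNReal.ofReal_pos.mpr ha0))
  refine ⟨n₀, fun n hn => ?_⟩
  have hAn := hn₀ n hn
  have hAn_ne : muI α (A n) ≠ ∞ := (hAn.trans ENNReal.ofReal_lt_top).ne
  set b : ℝ := (muI α (A n)).toReal with hb_def
  have hb_le : b ≤ a := by
    rw [hb_def]
    calc (muI α (A n)).toReal ≤ (ENNReal.ofReal a).toReal :=
          ENNReal.toReal_mono ENNReal.ofReal_ne_top hAn.le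
    _ = a := ENNReal.toReal_ofReal ha0.le
  -- splitting v n
  set Y : ℝ → ℝ := (A n).indicator X with hY_def
  have hYmeas : Measurable Y := hXmeas.indicator (hAmeas n)
  have hY0 : ∀ s, 0 ≤ Y s := fun s => Set.indicator_nonneg (fun s _ => hX0 s) s
  have hYle : ∀ s, Y s ≤ X s := fun s => Set.indicator_le_self' (fun s _ => hX0 s) s
  have hYmem : E.Mem Y := by
    apply (E.ideal hYmeas.aemeasurable hx ?_).1
    filter_upwards [hXae] with s hs
    rw [abs_of_nonneg (hY0 s), hs]
    exact hYle s
  set m1 : ℝ → ℝ := fun s => min (v n s) η with hm1_def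
  have hm10 : ∀ s, 0 ≤ m1 s := fun s => le_min (hv0 n s) hη.le
  have hm1meas : Measurable m1 := (hvmeas n).min measurable_const
  -- bound the first piece
  have hmemRη : E.Mem (fun t => min (rearr α x t) η) := by
    apply (E.ideal ((OCProof.rearr_measurable hnjx).min measurable_const).aemeasurable
      hxr.1 ?_).1
    apply Filter.Eventually.of_forall
    intro t
    rw [abs_of_nonneg (le_min (OCProof.rearr_nonneg x t) hη.le),
      abs_of_nonneg (OCProof.rearr_nonneg x t)]
    exact min_le_left _ _
  have hmemXη : E.Mem (fun s => min (X s) η) ∧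
      E.N (fun s => min (X s) η) = E.N (fun t => min (rearr α x t) η) := by
    apply E.symmetric (hXmeas.min measurable_const).aemeasurable hmemRη
    exact OCProof.distr_min_congr hX0 (OCProof.rearr_nonneg x)
      (hXd.trans (OCProof.distr_rearr hα hnjx).symm) hη
  have hNm1 : E.N m1 < ε/4 := by
    have h1 : E.N m1 ≤ E.N (fun s => min (X s) η) := by
      apply (E.ideal hm1meas.aemeasurable hmemXη.1 ?_).2
      apply Filter.Eventually.of_forall
      intro s
      rw [abs_of_nonneg (hm10 s), abs_of_nonneg (le_min (hX0 s) hη.le)]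
      exact min_le_min (hvle n s) le_rfl
    rw [hmemXη.2] at h1
    exact lt_of_le_of_lt h1 hk₁
  have hm1mem : E.Mem m1 := by
    apply (E.ideal hm1meas.aemeasurable hmemXη.1 ?_).1
    apply Filter.Eventually.of_forall
    intro s
    rw [abs_of_nonneg (hm10 s), abs_of_nonneg (le_min (hX0 s) hη.le)]
    exact min_le_min (hvle n s) le_rfl
  have hsplit : ∀ s, v n s ≤ m1 s + Y s := by
    intro s
    by_cases hsA : s ∈ A n
    · have hsv : η < v n s := hsA
      rw [hY_def, Set.indicator_of_mem hsA, hm1_def]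
      simp only
      rw [min_eq_right hsv.le]
      have := hvle n s
      linarith
    · have hvs : v n s ≤ η := not_lt.mp hsA
      rw [hY_def, Set.indicator_of_notMem hsA, hm1_def]
      simp only
      rw [min_eq_left hvs, add_zero]
  have hNv_le : E.N (v n) ≤ E.N m1 + E.N Y := by
    have hsum_mem : E.Mem (m1 + Y) := E.add_mem hm1mem hYmem
    have h1 : E.N (v n) ≤ E.N (m1 + Y) := by
      apply (E.ideal (hvmeas n).aemeasurable hsum_mem ?_).2
      apply Filter.Eventually.of_forall
      intro s
      rw [abs_of_nonneg (hv0 n s), Pi.add_apply,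
        abs_of_nonneg (add_nonneg (hm10 s) (hY0 s))]
      exact hsplit s
    exact h1.trans (E.norm_add_le m1 Y)
  -- bound the second piece
  have hNY : E.N Y < ε/4 + ε/4 := by
    by_cases hA0 : muI α (A n) = 0
    · have hz : E.N Y = 0 := by
        apply (E.norm_eq_zero_iff hYmem).mpr
        rw [ae_iff]
        apply measure_mono_null ?_ hA0
        intro s hs
        simp only [Set.mem_setOf_eq] at hs
        by_contra hsA
        exact hs (by rw [hY_def, Set.indicator_of_notMem hsA])
      rw [hz]
      linarith
    · have hb0 : 0 < b := by
        rw [hb_def]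
        exact ENNReal.toReal_pos hA0 hAn_ne
      have hYr := OCProof.mem_rearr (E := E) hα hYmem
      set Q : ℝ → ℝ :=
        (rearr α x a) • (Set.indicator (Ioo (0:ℝ) b) (fun _ => (1:ℝ))) with hQ_def
      have hQ0 : ∀ t, 0 ≤ Q t := by
        intro t
        rw [hQ_def]
        simp only [Pi.smul_apply, smul_eq_mul]
        exact mul_nonneg (OCProof.rearr_nonneg x a)
          (Set.indicator_nonneg (fun _ _ => by norm_num) t)
      have hQmeas : Measurable Q :=
        (measurable_const.indicator measurableSet_Ioo).const_smul _
      have hdY : ∀ lam : ℝ, 0 < lam → distr α Y lam ≤ muI α (A n) := by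
        intro lam hlam
        apply measure_mono
        intro s hs
        simp only [Set.mem_setOf_eq] at hs
        by_contra hsA
        rw [hY_def, Set.indicator_of_notMem hsA] at hs
        rw [abs_zero] at hs
        linarith
      have hzero : ∀ t : ℝ, b ≤ t → rearr α Y t = 0 := by
        intro t hbt
        apply OCProof.rearr_eq_zero_of_distr_le
        intro lam hlam
        calc distr α Y lam ≤ muI α (A n) := hdY lam hlam
        _ = ENNReal.ofReal b := (ENNReal.ofReal_toReal hAn_ne).symm
        _ ≤ ENNReal.ofReal t := ENNReal.ofReal_le_ofReal hbt
      have hYle_r : ∀ t, 0 < t → rearr α Y t ≤ rearr α x t := by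
        intro t ht
        apply OCProof.rearr_mono_distr ?_ hnjx ht
        intro lam hlam
        rw [← hXd]
        apply measure_mono
        intro s hs
        simp only [Set.mem_setOf_eq] at hs ⊢
        calc lam < |Y s| := hs
        _ = Y s := abs_of_nonneg (hY0 s)
        _ ≤ X s := hYle s
        _ = |X s| := (abs_of_nonneg (hX0 s)).symm
      have hptw : ∀ᵐ t ∂(muI α), |rearr α Y t| ≤ |(P + Q) t| := by
        filter_upwards [OCProof.ae_muI_pos (α := α)] with t ht
        rw [Pi.add_apply, abs_of_nonneg (OCProof.rearr_nonneg Y t),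
          abs_of_nonneg (add_nonneg (hP0 t) (hQ0 t))]
        rcases lt_or_ge t b with htb | htb
        · have hQt : Q t = rearr α x a := by
            rw [hQ_def]
            simp only [Pi.smul_apply, smul_eq_mul]
            rw [Set.indicator_of_mem (Set.mem_Ioo.mpr ⟨ht, htb⟩) (fun _ => (1:ℝ)), mul_one]
          have h5 : rearr α x t ≤ P t + rearr α x a := by
            rw [hP_def]
            simp only
            have := min_le_right (rearr α x t) (rearr α x a)
            linarith
          calc rearr α Y t ≤ rearr α x t := hYle_r t ht
          _ ≤ P t + Q t := by rw [hQt]; exact h5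
        · rw [hzero t htb]
          exact add_nonneg (hP0 t) (hQ0 t)
      have hPQmem : E.Mem (P + Q) := by
        apply (E.ideal (hPmeas.add hQmeas).aemeasurable
          (E.smul_mem 2 hxr.1) ?_).1
        filter_upwards [OCProof.ae_muI_pos (α := α)] with t ht
        rw [Pi.add_apply, abs_of_nonneg (add_nonneg (hP0 t) (hQ0 t)),
          Pi.smul_apply, smul_eq_mul,
          abs_of_nonneg (by
            have := OCProof.rearr_nonneg (α := α) x t
            linarith : (0:ℝ) ≤ 2 * rearr α x t)]
        rcases lt_or_ge t b with htb | htb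
        · have hQt : Q t = rearr α x a := by
            rw [hQ_def]
            simp only [Pi.smul_apply, smul_eq_mul]
            rw [Set.indicator_of_mem (Set.mem_Ioo.mpr ⟨ht, htb⟩) (fun _ => (1:ℝ)), mul_one]
          have h6 : rearr α x a ≤ rearr α x t :=
            OCProof.rearr_anti hnjx ht (le_trans htb.le hb_le)
          have h7 := hPle t
          rw [hQt]
          linarith
        · have hQt : Q t = 0 := by
            rw [hQ_def]
            simp only [Pi.smul_apply, smul_eq_mul]
            rw [Set.indicator_of_notMem (fun hmem => absurd (Set.mem_Ioo.mp hmem).2 (not_lt.mpr htb)) (fun _ => (1:ℝ)),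
              mul_zero]
          have h7 := hPle t
          have h8 := OCProof.rearr_nonneg (α := α) x t
          rw [hQt]
          linarith
      have hNY2 : E.N Y ≤ E.N P + rearr α x a * E.fund b := by
        calc E.N Y = E.N (rearr α Y) := hYr.2.symm
        _ ≤ E.N (P + Q) := (E.ideal
            (OCProof.rearr_measurable (OCProof.nj_of_mem hYmem)).aemeasurable
            hPQmem hptw).2
        _ ≤ E.N P + E.N Q := E.norm_add_le P Q
        _ = E.N P + rearr α x a * E.fund b := by
              rw [hQ_def, E.norm_smul', abs_of_nonneg (OCProof.rearr_nonneg x a)]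
              rfl
      have hfund : rearr α x a * E.fund b < ε/4 := by
        have h6 : rearr α x a ≤ rearr α x b := OCProof.rearr_anti hnjx hb0 hb_le
        have h7 : 0 ≤ E.fund b := E.norm_nonneg' _
        have h8 := hδ2 (Set.mem_Ioi.mpr hb0)
          (by rw [Real.dist_eq, sub_zero, abs_of_pos hb0]
              exact lt_of_le_of_lt hb_le ha2)
        rw [Real.dist_eq, sub_zero] at h8
        have h9 : rearr α x b * E.fund b ≤ |rearr α x b * E.fund b| := le_abs_self _
        have h10 : rearr α x a * E.fund b ≤ rearr α x b * E.fund b :=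
          mul_le_mul_of_nonneg_right h6 h7
        calc rearr α x a * E.fund b ≤ rearr α x b * E.fund b := h10
        _ ≤ |rearr α x b * E.fund b| := h9
        _ < ε/4 := h8
      calc E.N Y ≤ E.N P + rearr α x a * E.fund b := hNY2
      _ < ε/4 + ε/4 := by
            have := E.norm_nonneg' P
            apply add_lt_add_of_lt_of_le hNP (le_of_lt hfund) |>.trans_le
            linarith
  rw [Real.dist_eq, sub_zero, abs_of_nonneg (E.norm_nonneg' _)]
  calc E.N (v n) ≤ E.N m1 + E.N Y := hNv_le
  _ < ε/4 + (ε/4 + ε/4) := by linarith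
  _ < ε := by linarith
end
end
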